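/- arXiv:2410.20240 — 2 statements merged into one kernel-verified Lean document; each statement's English description precedes it below -/
import Mathlib

section
/- Bivariate supermodular ordering from stochastic dominance (key construction in the proof of the synecdochic-pair ordering theorem): let a=(a_k)_{k∈ℕ} and b=(b_k)_{k∈ℕ} be probability mass functions on ℕ such that ∑_{j=0}^{k}a_j≥∑_{j=0}^{k}b_j for all k∈ℕ (i.e., the law with pmf a precedes the law with pmf b in the usual stochastic order). Set r=∑_{k∈ℕ}max(b_k−a_k,0), which also equals ∑_{k∈ℕ}max(a_k−b_k,0). Let (I,H) and (I′,H′) be random pairs with values in {0,1}×ℕ whose joint laws are P(I=1,H=k)=a_k/(1+r), P(I=0,H=k)=max(b_k−a_k,0)/(1+r), and P(I′=1,H′=k)=b_k/(1+r), P(I′=0,H′=k)=max(a_k−b_k,0)/(1+r) for k∈ℕ (these are valid probability mass functions). Then (I,H)⪯_sm(I′,H′). -/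
open MeasureTheory ProbabilityTheory
open scoped ENNReal Classical

noncomputable section

/-- `X` has the Poisson distribution with (real) parameter `r`. -/
def IsPoissonRV {Ω : Type*} [MeasureSpace Ω] (X : Ω → ℕ) (r : ℝ) : Prop :=
  Measurable X ∧ ∀ k : ℕ,
    (ℙ : Measure Ω) {ω | X ω = k} = ENNReal.ofReal (Real.exp (-r) * r ^ k / (Nat.factorial k))

/-- `X` is a Bernoulli random variable with success probability `p`. -/
def IsBernoulliRV {Ω : Type*} [MeasureSpace Ω] (X : Ω → Bool) (p : ℝ) : Prop :=
  Measurable X ∧ (ℙ : Measure Ω) {ω | X ω = true} = ENNReal.ofReal p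

/-- `pa` is the parent map of the tree `G` rooted at `r`. -/
def IsParentMap {V : Type*} (G : SimpleGraph V) (r : V) (pa : V → V) : Prop :=
  pa r = r ∧ (∀ v, v ≠ r → G.Adj (pa v) v) ∧ ∀ v, ∃ n : ℕ, pa^[n] v = r

/-- `N` is an MPMRF vector built (via binomial thinning of the parent value plus an
independent Poisson innovation) along the tree with parent map `pa` rooted at `r`. -/
def IsMPMRF {V Ω : Type*} [Fintype V] [DecidableEq V] [MeasureSpace Ω]
    (lam : ℝ) (α : V → V → ℝ) (pa : V → V) (r : V) (N : V → Ω → ℕ) : Prop :=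
  ∃ (L : V → Ω → ℕ) (I : V → ℕ → Ω → Bool),
    iIndepFun
      (Sum.elim L (fun (p : V × ℕ) (ω : Ω) => (if I p.1 p.2 ω then 1 else 0 : ℕ))) ℙ ∧
    IsPoissonRV (L r) lam ∧
    (∀ v, v ≠ r → IsPoissonRV (L v) (lam * (1 - α (pa v) v))) ∧
    (∀ v i, IsBernoulliRV (I v i) (α (pa v) v)) ∧
    (∀ ω, N r ω = L r ω) ∧
    ∀ v, v ≠ r → ∀ ω, N v ω = L v ω + ∑ i ∈ Finset.range (N (pa v) ω), (if I v i ω then 1 else 0)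

/-- supermodular function on ℝ². -/
def Supermodular (ζ : ℝ × ℝ → ℝ) : Prop :=
  ∀ x y : ℝ × ℝ, ζ x + ζ y ≤ ζ (x ⊓ y) + ζ (x ⊔ y)

/-- supermodular order for bivariate random vectors. -/
def SupermodularLE {Ω Ω' : Type*} [MeasureSpace Ω] [MeasureSpace Ω']
    (X : Ω → ℝ × ℝ) (Y : Ω' → ℝ × ℝ) : Prop :=
  ∀ ζ : ℝ × ℝ → ℝ, Supermodular ζ →
    Integrable (fun ω => ζ (X ω)) ℙ → Integrable (fun ω => ζ (Y ω)) ℙ →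
    ∫ ω, ζ (X ω) ∂ℙ ≤ ∫ ω, ζ (Y ω) ∂ℙ

/-- usual stochastic order for ℕ-valued random variables. -/
def StochLE {Ω Ω' : Type*} [MeasureSpace Ω] [MeasureSpace Ω']
    (X : Ω → ℕ) (Y : Ω' → ℕ) : Prop :=
  ∀ k : ℕ, (ℙ : Measure Ω) {ω | k < X ω} ≤ (ℙ : Measure Ω') {ω | k < Y ω}

/-- convex order for real random variables. -/
def ConvexLE {Ω Ω' : Type*} [MeasureSpace Ω] [MeasureSpace Ω']
    (X : Ω → ℝ) (Y : Ω' → ℝ) : Prop :=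
  ∀ φ : ℝ → ℝ, ConvexOn ℝ Set.univ φ →
    Integrable (fun ω => φ (X ω)) ℙ → Integrable (fun ω => φ (Y ω)) ℙ →
    ∫ ω, φ (X ω) ∂ℙ ≤ ∫ ω, φ (Y ω) ∂ℙ

/-- the recursive family of pgf's `η_v^{T_r}` associated with the rooted tree with
parent map `pa` and edge parameters `α`. -/
def IsEta {V : Type*} [Fintype V] (α : V → V → ℝ) (pa : V → V) (η : V → ℝ → ℝ) : Prop :=
  ∀ v t, η v t = t * ∏ j ∈ Finset.univ.filter (fun j => pa j = v ∧ j ≠ v),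
    (1 - α v j + α v j * η j t)

/-- `g` is the probability generating function of `X` (on `[-1,1]`). -/
def HasPGF {Ω : Type*} [MeasureSpace Ω] (X : Ω → ℕ) (g : ℝ → ℝ) : Prop :=
  ∀ t ∈ Set.Icc (-1 : ℝ) 1, ∫ ω, t ^ X ω ∂ℙ = g t




/-- partial sums + tail decomposition in `ℝ≥0∞`. -/
lemma aux_tail (P : ℕ → ℝ≥0∞) (i : ℕ) :
    (∑ k ∈ Finset.range (i + 1), P k) + (∑' k, if i < k then P k else 0) = ∑' k, P k := by
  have h1 : ∑' k, P k = ∑' k, ((if i < k then 0 else P k) + (if i < k then P k else 0)) := by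
    refine tsum_congr fun k => ?_
    by_cases h : i < k <;> simp [h]
  rw [h1, ENNReal.tsum_add]
  congr 1
  rw [tsum_eq_sum (s := Finset.range (i + 1))
    (fun k hk => by simp [Finset.mem_range, Nat.lt_succ_iff] at hk; simp [Nat.lt_of_succ_le, hk,
        Nat.lt_of_lt_of_le])]
  · refine Finset.sum_congr rfl fun k hk => ?_
    simp [Finset.mem_range, Nat.lt_succ_iff] at hk
    simp [Nat.not_lt.mpr hk]

/-- key rearrangement inequality in `ℝ≥0∞`. -/
lemma aux_key (P Q : ℕ → ℝ≥0∞) (d : ℕ → ℝ) (hd0 : d 0 = 0) (hdm : Monotone d)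
    (htail : ∀ i : ℕ, (∑' k, if i < k then P k else 0) ≤ ∑' k, if i < k then Q k else 0) :
    ∑' k, P k * ENNReal.ofReal (d k) ≤ ∑' k, Q k * ENNReal.ofReal (d k) := by
  have hdnon : ∀ k, 0 ≤ d k := fun k => hd0 ▸ hdm (Nat.zero_le k)
  set E : ℕ → ℝ≥0∞ := fun i => ENNReal.ofReal (d (i + 1) - d i) with hE
  have hdsum : ∀ k, ENNReal.ofReal (d k) = ∑ i ∈ Finset.range k, E i := by
    intro k
    induction k with
    | zero => simp [hd0]
    | succ n ih =>
        rw [Finset.sum_range_succ, ← ih,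
          ← ENNReal.ofReal_add (hdnon n) (sub_nonneg.2 (hdm (Nat.le_succ n)))]
        congr 1; ring
  have expand : ∀ R : ℕ → ℝ≥0∞,
      ∑' k, R k * ENNReal.ofReal (d k) = ∑' i, E i * ∑' k, (if i < k then R k else 0) := by
    intro R
    calc ∑' k, R k * ENNReal.ofReal (d k)
        = ∑' k, ∑' i, (if i < k then E i * R k else 0) := by
          refine tsum_congr fun k => ?_
          rw [tsum_eq_sum (s := Finset.range k) (fun i hi => by
            simp only [Finset.mem_range, not_lt] at hi
            exact if_neg (Nat.not_lt.mpr hi))]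
          rw [hdsum k, Finset.mul_sum]
          refine (Finset.sum_congr rfl fun i hi => ?_)
          simp only [Finset.mem_range] at hi
          rw [if_pos hi, mul_comm]
      _ = ∑' i, ∑' k, (if i < k then E i * R k else 0) := ENNReal.tsum_comm
      _ = ∑' i, E i * ∑' k, (if i < k then R k else 0) := by
          refine tsum_congr fun i => ?_
          rw [← ENNReal.tsum_mul_left]
          refine tsum_congr fun k => ?_
          by_cases h : i < k <;> simp [h]
  rw [expand P, expand Q]
  exact ENNReal.tsum_le_tsum fun i => mul_le_mul_right (htail i) _




lemma aux_null {Ω : Type*} [MeasureSpace Ω] [IsProbabilityMeasure (ℙ : Measure Ω)]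
    {ι : Type*} [Countable ι] (s : ι → Set Ω) (hd : Pairwise (Function.onFun Disjoint s))
    (hc : ∀ ω, ∃ i, ω ∈ s i) (hsum : ∑' i, (ℙ : Measure Ω) (s i) = 1) (i : ι) :
    NullMeasurableSet (s i) (ℙ : Measure Ω) := by
  set μ := (ℙ : Measure Ω) with hμ
  set T : Set Ω := ⋃ j, (if j = i then (∅ : Set Ω) else toMeasurable μ (s j)) with hT
  have hTm : MeasurableSet T := MeasurableSet.iUnion fun j => by
    by_cases h : j = i <;> simp [h, measurableSet_toMeasurable]
  have hsub1 : Tᶜ ⊆ s i := by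
    intro ω hω
    obtain ⟨j, hj⟩ := hc ω
    by_cases h : j = i
    · exact h ▸ hj
    · exact absurd (Set.mem_iUnion.2 ⟨j, by simp [h]; exact subset_toMeasurable μ (s j) hj⟩) hω
  have hμles : μ (s i) ≤ 1 := (measure_mono (Set.subset_univ _)).trans_eq measure_univ
  have hTb : μ T ≤ 1 - μ (s i) := by
    have h1 : μ T ≤ ∑' j, μ (if j = i then (∅ : Set Ω) else toMeasurable μ (s j)) :=
      measure_iUnion_le _
    have h2 : ∀ j, μ (if j = i then (∅ : Set Ω) else toMeasurable μ (s j))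
        = if j = i then 0 else μ (s j) := by
      intro j; by_cases h : j = i <;> simp [h, measure_toMeasurable]
    rw [tsum_congr h2] at h1
    have h3 : μ (s i) + ∑' j, (if j = i then 0 else μ (s j)) = 1 := by
      rw [(ENNReal.tsum_eq_add_tsum_ite (f := fun j => μ (s j)) i).symm]
      exact hsum
    have h4 : (∑' j, if j = i then 0 else μ (s j)) = 1 - μ (s i) :=
      ENNReal.eq_sub_of_add_eq (measure_ne_top μ _) (by rw [add_comm]; exact h3)
    exact h1.trans_eq h4
  have hTc : μ (s i) ≤ μ Tᶜ := by
    rw [measure_compl hTm (measure_ne_top μ T), measure_univ]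
    calc μ (s i) = 1 - (1 - μ (s i)) := by
          rw [ENNReal.sub_sub_cancel ENNReal.one_ne_top hμles]
      _ ≤ 1 - μ T := tsub_le_tsub_left hTb 1
  have hsub2 : s i ⊆ toMeasurable μ (s i) := subset_toMeasurable μ (s i)
  have hnull : μ (s i \ Tᶜ) = 0 := by
    have hd1 : Tᶜ ⊆ toMeasurable μ (s i) := hsub1.trans hsub2
    have hdiff : μ (toMeasurable μ (s i) \ Tᶜ) = μ (toMeasurable μ (s i)) - μ Tᶜ :=
      measure_diff hd1 hTm.compl.nullMeasurableSet (measure_ne_top μ _)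
    have : μ (toMeasurable μ (s i) \ Tᶜ) = 0 := by
      rw [hdiff, measure_toMeasurable]
      exact tsub_eq_zero_of_le hTc
    exact measure_mono_null (Set.diff_subset_diff_left hsub2) this
  have : s i = Tᶜ ∪ (s i \ Tᶜ) := (Set.union_diff_cancel hsub1).symm
  rw [this]
  exact hTm.compl.nullMeasurableSet.union (NullMeasurableSet.of_null hnull)


lemma aux_repr {Ω : Type*} [MeasureSpace Ω] [IsProbabilityMeasure (ℙ : Measure Ω)]
    (I H : Ω → ℕ) (hI : ∀ ω, I ω ≤ 1) (p1 p0 : ℕ → ℝ)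
    (h1 : ∀ k, 0 ≤ p1 k) (h0 : ∀ k, 0 ≤ p0 k)
    (hm1 : ∀ k, (ℙ : Measure Ω) {ω | I ω = 1 ∧ H ω = k} = ENNReal.ofReal (p1 k))
    (hm0 : ∀ k, (ℙ : Measure Ω) {ω | I ω = 0 ∧ H ω = k} = ENNReal.ofReal (p0 k))
    (hs1 : Summable p1) (hs0 : Summable p0)
    (htot : (∑' k, p1 k) + (∑' k, p0 k) = 1)
    (f : ℕ → ℕ → ℝ) (hint : Integrable (fun ω => f (I ω) (H ω)) (ℙ : Measure Ω)) :
    Summable (fun k => f 1 k * p1 k) ∧ Summable (fun k => f 0 k * p0 k) ∧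
      ∫ ω, f (I ω) (H ω) ∂(ℙ : Measure Ω)
        = (∑' k, f 1 k * p1 k) + (∑' k, f 0 k * p0 k) := by
  classical
  set μ := (ℙ : Measure Ω) with hμdef
  set s : Bool × ℕ → Set Ω :=
    fun p => {ω | I ω = (if p.1 then 1 else 0) ∧ H ω = p.2} with hs
  have hval : ∀ p : Bool × ℕ, μ (s p) = ENNReal.ofReal (if p.1 then p1 p.2 else p0 p.2) := by
    rintro ⟨b, k⟩
    cases b
    · simpa [hs] using hm0 k
    · simpa [hs] using hm1 k
  have hdisj : Pairwise (Function.onFun Disjoint s) := by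
    rintro ⟨b, k⟩ ⟨b', k'⟩ hne
    refine Set.disjoint_left.2 fun ω hω hω' => hne ?_
    simp only [hs, Set.mem_setOf_eq] at hω hω'
    have hb : b = b' := by
      by_contra h
      have := hω.1.symm.trans hω'.1
      cases b <;> cases b' <;> simp_all
    have hk : k = k' := hω.2.symm.trans hω'.2
    simp [hb, hk]
  have hcov : ∀ ω, ∃ p, ω ∈ s p := by
    intro ω
    rcases Nat.le_one_iff_eq_zero_or_eq_one.1 (hI ω) with h | h
    · exact ⟨(false, H ω), by simp [hs, h]⟩
    · exact ⟨(true, H ω), by simp [hs, h]⟩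
  have hcovU : (⋃ p, s p) = Set.univ :=
    Set.eq_univ_of_forall fun ω => Set.mem_iUnion.2 (hcov ω)
  have hsummeas : ∑' p : Bool × ℕ, μ (s p) = 1 := by
    rw [tsum_congr hval,
      ENNReal.tsum_prod (f := fun (b : Bool) (k : ℕ) => ENNReal.ofReal (if b = true then p1 k else p0 k))]
    rw [tsum_bool]
    rw [show (∑' k, ENNReal.ofReal (if (false : Bool) then p1 k else p0 k)) =
      ENNReal.ofReal (∑' k, p0 k) by
        rw [ENNReal.ofReal_tsum_of_nonneg h0 hs0]; simp]
    rw [show (∑' k, ENNReal.ofReal (if (true : Bool) then p1 k else p0 k)) =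
      ENNReal.ofReal (∑' k, p1 k) by
        rw [ENNReal.ofReal_tsum_of_nonneg h1 hs1]; simp]
    rw [← ENNReal.ofReal_add (tsum_nonneg fun k => h0 k) (tsum_nonneg fun k => h1 k)]
    rw [add_comm (∑' k, p0 k), htot]
    simp
  have hnm : ∀ p, NullMeasurableSet (s p) μ := aux_null s hdisj hcov hsummeas
  have haed : Pairwise (Function.onFun (AEDisjoint μ) s) := hdisj.mono fun _ _ h => h.aedisjoint
  have hintU : IntegrableOn (fun ω => f (I ω) (H ω)) (⋃ p, s p) μ := by
    rw [hcovU]; exact hint.integrableOn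
  have hpiece : ∀ p : Bool × ℕ, ∫ ω in s p, f (I ω) (H ω) ∂μ
      = f (if p.1 then 1 else 0) p.2 * (if p.1 then p1 p.2 else p0 p.2) := by
    rintro ⟨b, k⟩
    have hae : ∀ᵐ ω ∂μ.restrict (s (b, k)),
        f (I ω) (H ω) = f (if b then 1 else 0) k :=
      (ae_restrict_mem₀ (hnm (b, k))).mono fun ω hω => by
        simp only [hs, Set.mem_setOf_eq] at hω
        rw [hω.1, hω.2]
    rw [integral_congr_ae hae, setIntegral_const, measureReal_def, hval (b, k), smul_eq_mul,
      ENNReal.toReal_ofReal (by by_cases hb : b <;> simp [hb, h1 k, h0 k]), mul_comm]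
  have hhs : HasSum (fun p : Bool × ℕ => ∫ ω in s p, f (I ω) (H ω) ∂μ)
      (∫ ω, f (I ω) (H ω) ∂μ) := by
    have := hasSum_integral_iUnion_ae hnm haed hintU
    rwa [hcovU, setIntegral_univ] at this
  have hhs2 : HasSum
      (fun p : Bool × ℕ => f (if p.1 then 1 else 0) p.2 * (if p.1 then p1 p.2 else p0 p.2))
      (∫ ω, f (I ω) (H ω) ∂μ) := by
    refine hhs.congr_fun fun p => (hpiece p).symm ▸ rfl
  have hsummable := hhs2.summable
  have hsum1 : Summable (fun k => f 1 k * p1 k) := by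
    have := hsummable.comp_injective (i := fun k : ℕ => ((true : Bool), k))
      (fun k k' h => by simpa using h)
    simpa [Function.comp_def] using this
  have hsum0 : Summable (fun k => f 0 k * p0 k) := by
    have := hsummable.comp_injective (i := fun k : ℕ => ((false : Bool), k))
      (fun k k' h => by simpa using h)
    simpa [Function.comp_def] using this
  refine ⟨hsum1, hsum0, ?_⟩
  rw [← hhs2.tsum_eq, Summable.tsum_prod hsummable, tsum_bool, add_comm]
  simp


/-- bivariate supermodular ordering from stochastic dominance between
two pmf's `a` and `b` on `ℕ` (the mass-transfer construction used in the proof of the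
synecdochic-pair ordering theorem). -/
theorem mass_transfer_supermodular
    {Ω Ω' : Type*}
    [MeasureSpace Ω] [IsProbabilityMeasure (ℙ : Measure Ω)]
    [MeasureSpace Ω'] [IsProbabilityMeasure (ℙ : Measure Ω')]
    (a b : ℕ → ℝ)
    (ha0 : ∀ k, 0 ≤ a k) (hb0 : ∀ k, 0 ≤ b k)
    (ha1 : ∑' k, a k = 1) (hb1 : ∑' k, b k = 1)
    (hst : ∀ k : ℕ, ∑ j ∈ Finset.range (k + 1), b j ≤ ∑ j ∈ Finset.range (k + 1), a j)
    (r : ℝ) (hr : r = ∑' k, max (b k - a k) 0)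
    (I H : Ω → ℕ) (I' H' : Ω' → ℕ)
    (hI01 : ∀ ω, I ω ≤ 1) (hI'01 : ∀ ω, I' ω ≤ 1)
    (hjoint1 : ∀ k : ℕ,
      (ℙ : Measure Ω) {ω | I ω = 1 ∧ H ω = k} = ENNReal.ofReal (a k / (1 + r)))
    (hjoint0 : ∀ k : ℕ,
      (ℙ : Measure Ω) {ω | I ω = 0 ∧ H ω = k} =
        ENNReal.ofReal (max (b k - a k) 0 / (1 + r)))
    (hjoint1' : ∀ k : ℕ,
      (ℙ : Measure Ω') {ω | I' ω = 1 ∧ H' ω = k} = ENNReal.ofReal (b k / (1 + r)))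
    (hjoint0' : ∀ k : ℕ,
      (ℙ : Measure Ω') {ω | I' ω = 0 ∧ H' ω = k} =
        ENNReal.ofReal (max (a k - b k) 0 / (1 + r))) :
    SupermodularLE (fun ω => ((I ω : ℝ), (H ω : ℝ)))
      (fun ω => ((I' ω : ℝ), (H' ω : ℝ))) := by
  intro ζ hζ hintX hintY
  have hsa : Summable a := by
    by_contra h; rw [tsum_eq_zero_of_not_summable h] at ha1; norm_num at ha1
  have hsb : Summable b := by
    by_contra h; rw [tsum_eq_zero_of_not_summable h] at hb1; norm_num at hb1
  set q : ℕ → ℝ := fun k => max (b k - a k) 0 with hqdef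
  set p : ℕ → ℝ := fun k => max (a k - b k) 0 with hpdef
  have hq0 : ∀ k, 0 ≤ q k := fun k => le_max_right _ _
  have hp0 : ∀ k, 0 ≤ p k := fun k => le_max_right _ _
  have hqb : ∀ k, q k ≤ b k := fun k => max_le (by linarith [ha0 k]) (hb0 k)
  have hpa : ∀ k, p k ≤ a k := fun k => max_le (by linarith [hb0 k]) (ha0 k)
  have hsq : Summable q := hsb.of_nonneg_of_le hq0 hqb
  have hsp : Summable p := hsa.of_nonneg_of_le hp0 hpa
  have hqp : ∀ k, q k - p k = b k - a k := fun k => by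
    simpa [hqdef, hpdef, neg_sub] using max_zero_sub_max_neg_zero_eq_self (b k - a k)
  have hrq : ∑' k, q k = r := hr.symm
  have hr0 : 0 ≤ r := hrq ▸ tsum_nonneg hq0
  have hrp : ∑' k, p k = r := by
    have h1 : ∑' k, (q k - p k) = (∑' k, q k) - ∑' k, p k := Summable.tsum_sub hsq hsp
    have h2 : ∑' k, (q k - p k) = (∑' k, b k) - ∑' k, a k := by
      rw [tsum_congr hqp]; exact Summable.tsum_sub hsb hsa
    rw [h1] at h2
    rw [ha1, hb1] at h2
    linarith [hrq]
  have hc : (0:ℝ) < 1 + r := by linarith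
  -- representation of both integrals
  have hreprX := aux_repr I H hI01 (fun k => a k / (1 + r)) (fun k => q k / (1 + r))
      (fun k => div_nonneg (ha0 k) hc.le) (fun k => div_nonneg (hq0 k) hc.le)
      hjoint1 (fun k => hjoint0 k)
      (hsa.div_const _) (hsq.div_const _)
      (by rw [tsum_div_const, tsum_div_const, ha1, hrq]; field_simp)
      (fun i k => ζ ((i : ℝ), (k : ℝ))) hintX
  have hreprY := aux_repr I' H' hI'01 (fun k => b k / (1 + r)) (fun k => p k / (1 + r))
      (fun k => div_nonneg (hb0 k) hc.le) (fun k => div_nonneg (hp0 k) hc.le)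
      hjoint1' (fun k => hjoint0' k)
      (hsb.div_const _) (hsp.div_const _)
      (by rw [tsum_div_const, tsum_div_const, hb1, hrp]; field_simp)
      (fun i k => ζ ((i : ℝ), (k : ℝ))) hintY
  obtain ⟨sA1, sQ0, hEX⟩ := hreprX
  obtain ⟨sB1, sP0, hEY⟩ := hreprY
  set F1 : ℕ → ℝ := fun k => ζ (1, (k : ℝ)) with hF1
  set F0 : ℕ → ℝ := fun k => ζ (0, (k : ℝ)) with hF0
  simp only [Nat.cast_one, Nat.cast_zero] at hEX hEY sA1 sQ0 sB1 sP0
  rw [show (∫ ω, ζ ((I ω : ℝ), (H ω : ℝ)) ∂(ℙ : Measure Ω))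
      = (∑' k, F1 k * (a k / (1 + r))) + (∑' k, F0 k * (q k / (1 + r))) from hEX]
  rw [show (∫ ω, ζ ((I' ω : ℝ), (H' ω : ℝ)) ∂(ℙ : Measure Ω'))
      = (∑' k, F1 k * (b k / (1 + r))) + (∑' k, F0 k * (p k / (1 + r))) from hEY]
  -- rewrite the tsums with the factor 1/(1+r) pulled out
  have hdiv : ∀ g h : ℕ → ℝ,
      (∑' k, g k * (h k / (1 + r))) = (∑' k, g k * h k) / (1 + r) := by
    intro g h
    rw [← tsum_div_const]
    exact tsum_congr fun k => by ring
  rw [hdiv F1 a, hdiv F0 q, hdiv F1 b, hdiv F0 p]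
  rw [← add_div, ← add_div]
  -- reduce to the core inequality
  have hcore : (∑' k, F1 k * a k) + (∑' k, F0 k * q k)
      ≤ (∑' k, F1 k * b k) + (∑' k, F0 k * p k) := by
    -- summabilities without the 1/(1+r) factor
    have strip : ∀ g h : ℕ → ℝ, Summable (fun k => g k * (h k / (1 + r))) →
        Summable (fun k => g k * h k) := by
      intro g h hs
      have := hs.mul_right (1 + r)
      refine this.congr fun k => ?_
      field_simp
    have sA1' : Summable (fun k => F1 k * a k) := strip F1 a sA1
    have sQ0' : Summable (fun k => F0 k * q k) := strip F0 q sQ0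
    have sB1' : Summable (fun k => F1 k * b k) := strip F1 b sB1
    have sP0' : Summable (fun k => F0 k * p k) := strip F0 p sP0
    have sP1 : Summable (fun k => F1 k * p k) := by
      refine summable_abs_iff.mp (Summable.of_nonneg_of_le (fun k => abs_nonneg _)
        (fun k => ?_) sA1'.abs)
      rw [abs_mul, abs_mul]
      exact mul_le_mul_of_nonneg_left
        (by rw [abs_of_nonneg (hp0 k), abs_of_nonneg (ha0 k)]; exact hpa k) (abs_nonneg _)
    have sQ1 : Summable (fun k => F1 k * q k) := by
      refine summable_abs_iff.mp (Summable.of_nonneg_of_le (fun k => abs_nonneg _)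
        (fun k => ?_) sB1'.abs)
      rw [abs_mul, abs_mul]
      exact mul_le_mul_of_nonneg_left
        (by rw [abs_of_nonneg (hq0 k), abs_of_nonneg (hb0 k)]; exact hqb k) (abs_nonneg _)
    -- expand F1 · b
    have hBsplit : (∑' k, F1 k * b k)
        = (∑' k, F1 k * a k) + ((∑' k, F1 k * q k) - ∑' k, F1 k * p k) := by
      rw [← Summable.tsum_sub sQ1 sP1, ← Summable.tsum_add sA1' (sQ1.sub sP1)]
      refine tsum_congr fun k => ?_
      have hb : b k = a k + q k - p k := by linarith [hqp k]
      rw [hb]; ring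
    -- monotone difference
    have hg : Monotone (fun k : ℕ => F1 k - F0 k) := by
      refine monotone_nat_of_le_succ fun k => ?_
      have h := hζ ((1 : ℝ), (k : ℝ)) ((0 : ℝ), ((k + 1 : ℕ) : ℝ))
      have hinf : ((1 : ℝ), (k : ℝ)) ⊓ ((0 : ℝ), ((k + 1 : ℕ) : ℝ)) = ((0 : ℝ), (k : ℝ)) := by
        rw [Prod.inf_def]
        refine Prod.ext ?_ ?_
        · simp [min_eq_right (by norm_num : (0:ℝ) ≤ 1)]
        · dsimp only
          exact min_eq_left (by push_cast; linarith)
      have hsup : ((1 : ℝ), (k : ℝ)) ⊔ ((0 : ℝ), ((k + 1 : ℕ) : ℝ))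
          = ((1 : ℝ), ((k + 1 : ℕ) : ℝ)) := by
        rw [Prod.sup_def]
        refine Prod.ext ?_ ?_
        · simp [max_eq_left (by norm_num : (0:ℝ) ≤ 1)]
        · dsimp only
          exact max_eq_right (by push_cast; linarith)
      rw [hinf, hsup] at h
      simp only [hF1, hF0]
      linarith
    set d : ℕ → ℝ := fun k => (F1 k - F0 k) - (F1 0 - F0 0) with hddef
    have hd0 : d 0 = 0 := by simp [hddef]
    have hdm : Monotone d := fun k l hkl => by
      simp only [hddef]
      have := hg hkl
      simp only at this
      linarith
    have hdnon : ∀ k, 0 ≤ d k := fun k => hd0 ▸ hdm (Nat.zero_le k)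
    have sdP : Summable (fun k => d k * p k) := by
      have h1 : Summable (fun k => F0 k * p k) := sP0'
      have h2 : Summable (fun k => (F1 0 - F0 0) * p k) := hsp.mul_left _
      refine ((sP1.sub h1).sub h2).congr fun k => ?_
      simp only [hddef]; ring
    have sdQ : Summable (fun k => d k * q k) := by
      have h1 : Summable (fun k => F0 k * q k) := sQ0'
      have h2 : Summable (fun k => (F1 0 - F0 0) * q k) := hsq.mul_left _
      refine ((sQ1.sub h1).sub h2).congr fun k => ?_
      simp only [hddef]; ring
    -- the key inequality via ENNReal
    have hdpq : (∑' k, d k * p k) ≤ ∑' k, d k * q k := by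
      have hofp : ENNReal.ofReal (∑' k, d k * p k)
          = ∑' k, ENNReal.ofReal (p k) * ENNReal.ofReal (d k) := by
        rw [ENNReal.ofReal_tsum_of_nonneg (fun k => mul_nonneg (hdnon k) (hp0 k)) sdP]
        exact tsum_congr fun k => by
          rw [mul_comm (d k), ENNReal.ofReal_mul (hp0 k)]
      have hofq : ENNReal.ofReal (∑' k, d k * q k)
          = ∑' k, ENNReal.ofReal (q k) * ENNReal.ofReal (d k) := by
        rw [ENNReal.ofReal_tsum_of_nonneg (fun k => mul_nonneg (hdnon k) (hq0 k)) sdQ]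
        exact tsum_congr fun k => by
          rw [mul_comm (d k), ENNReal.ofReal_mul (hq0 k)]
      have htotp : (∑' k, ENNReal.ofReal (p k)) = ENNReal.ofReal r := by
        rw [← ENNReal.ofReal_tsum_of_nonneg hp0 hsp, hrp]
      have htotq : (∑' k, ENNReal.ofReal (q k)) = ENNReal.ofReal r := by
        rw [← ENNReal.ofReal_tsum_of_nonneg hq0 hsq, hrq]
      have htail : ∀ i : ℕ, (∑' k, if i < k then ENNReal.ofReal (p k) else 0)
          ≤ ∑' k, if i < k then ENNReal.ofReal (q k) else 0 := by
        intro i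
        have hhead : (∑ k ∈ Finset.range (i + 1), q k) ≤ ∑ k ∈ Finset.range (i + 1), p k := by
          have h := hst i
          have h2 : (∑ k ∈ Finset.range (i + 1), (q k - p k))
              = (∑ k ∈ Finset.range (i + 1), b k) - ∑ k ∈ Finset.range (i + 1), a k := by
            rw [Finset.sum_congr rfl fun k _ => hqp k, Finset.sum_sub_distrib]
          rw [Finset.sum_sub_distrib] at h2
          linarith
        have e1 := aux_tail (fun k => ENNReal.ofReal (p k)) i
        have e2 := aux_tail (fun k => ENNReal.ofReal (q k)) i
        have hhp : (∑ k ∈ Finset.range (i + 1), ENNReal.ofReal (p k))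
            = ENNReal.ofReal (∑ k ∈ Finset.range (i + 1), p k) := by
          rw [ENNReal.ofReal_sum_of_nonneg fun k _ => hp0 k]
        have hhq : (∑ k ∈ Finset.range (i + 1), ENNReal.ofReal (q k))
            = ENNReal.ofReal (∑ k ∈ Finset.range (i + 1), q k) := by
          rw [ENNReal.ofReal_sum_of_nonneg fun k _ => hq0 k]
        have et1 : (∑' k, if i < k then ENNReal.ofReal (p k) else 0)
            = ENNReal.ofReal r - ENNReal.ofReal (∑ k ∈ Finset.range (i + 1), p k) := by
          refine ENNReal.eq_sub_of_add_eq ENNReal.ofReal_ne_top ?_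
          rw [add_comm, ← hhp, e1, htotp]
        have et2 : (∑' k, if i < k then ENNReal.ofReal (q k) else 0)
            = ENNReal.ofReal r - ENNReal.ofReal (∑ k ∈ Finset.range (i + 1), q k) := by
          refine ENNReal.eq_sub_of_add_eq ENNReal.ofReal_ne_top ?_
          rw [add_comm, ← hhq, e2, htotq]
        rw [et1, et2]
        exact tsub_le_tsub_left (ENNReal.ofReal_le_ofReal hhead) _
      have hkey := aux_key (fun k => ENNReal.ofReal (p k)) (fun k => ENNReal.ofReal (q k))
        d hd0 hdm htail
      rw [← hofp, ← hofq] at hkey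
      exact (ENNReal.ofReal_le_ofReal_iff
        (tsum_nonneg fun k => mul_nonneg (hdnon k) (hq0 k))).mp hkey
    -- unpack hdpq back to F1, F0
    have hgp : (∑' k, (F1 k - F0 k) * p k)
        = (∑' k, F1 k * p k) - ∑' k, F0 k * p k := by
      rw [← Summable.tsum_sub sP1 sP0']
      exact tsum_congr fun k => by ring
    have hgq : (∑' k, (F1 k - F0 k) * q k)
        = (∑' k, F1 k * q k) - ∑' k, F0 k * q k := by
      rw [← Summable.tsum_sub sQ1 sQ0']
      exact tsum_congr fun k => by ring
    have hdp' : (∑' k, d k * p k)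
        = ((∑' k, F1 k * p k) - ∑' k, F0 k * p k) - (F1 0 - F0 0) * r := by
      rw [← hgp, ← hrp, ← tsum_mul_left]
      rw [← Summable.tsum_sub (by
        refine (sP1.sub sP0').congr fun k => ?_; ring) (hsp.mul_left _)]
      exact tsum_congr fun k => by simp only [hddef]; ring
    have hdq' : (∑' k, d k * q k)
        = ((∑' k, F1 k * q k) - ∑' k, F0 k * q k) - (F1 0 - F0 0) * r := by
      rw [← hgq, ← hrq, ← tsum_mul_left]
      rw [← Summable.tsum_sub (by
        refine (sQ1.sub sQ0').congr fun k => ?_; ring) (hsq.mul_left _)]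
      exact tsum_congr fun k => by simp only [hddef]; ring
    rw [hdp', hdq'] at hdpq
    rw [hBsplit]
    linarith
  gcongr

end
end

section
/- Covariance with the aggregate equals an exponentially transformed closeness index: let T=(V,E) be a tree on d vertices with graph distance dist(v,j) (the number of edges on the unique path from v to j, with dist(v,v)=0), λ>0 and α∈(0,1). Let N∼MPMRF(λ,α1,T), where α1 assigns the parameter α to every edge, and M=∑_{j∈V}N_j. Then for every v∈V, Cov(N_v,M)=λ·∑_{j∈V}α^{dist(v,j)}. -/
set_option maxHeartbeats 1000000
set_option linter.unusedSectionVars false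


open MeasureTheory ProbabilityTheory
open scoped ENNReal Classical

noncomputable section

/-- covariance `Cov(X,Y) = E[XY] - E[X]E[Y]` (w.r.t. the ambient probability measure). -/
def cov {Ω : Type*} [MeasureSpace Ω] (X Y : Ω → ℝ) : ℝ :=
  ∫ ω, X ω * Y ω ∂ℙ - (∫ ω, X ω ∂ℙ) * (∫ ω, Y ω ∂ℙ)

namespace MPMRFAux
section AncGraph

variable {V : Type*} {pa : V → V} {r : V}

/-- `u` is an ancestor-or-self of `w`. -/
def Anc (pa : V → V) (u w : V) : Prop := ∃ n, pa^[n] w = u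

variable (hp : ∀ v, ∃ n : ℕ, pa^[n] v = r)

/-- depth of a vertex -/
def dep (v : V) : ℕ := Nat.find (hp v)

lemma dep_spec (v : V) : pa^[dep hp v] v = r := Nat.find_spec (hp v)

lemma dep_min {v : V} {n : ℕ} (h : pa^[n] v = r) : dep hp v ≤ n := Nat.find_le h

variable (hr : pa r = r)
include hp hr

lemma iterate_r (n : ℕ) : pa^[n] r = r := Function.iterate_fixed hr n

lemma dep_r : dep hp r = 0 := Nat.le_zero.1 (dep_min hp (by simp))

lemma dep_eq_zero_iff {v : V} : dep hp v = 0 ↔ v = r := by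
  constructor
  · intro h
    have := dep_spec hp v
    rwa [h] at this
  · rintro rfl; exact dep_r hp hr

lemma iterate_of_ge {v : V} {n : ℕ} (h : dep hp v ≤ n) : pa^[n] v = r := by
  have : n - dep hp v + dep hp v = n := Nat.sub_add_cancel h
  rw [← this, Function.iterate_add_apply, dep_spec hp v, iterate_r hp hr]

lemma dep_pa {v : V} (hv : v ≠ r) : dep hp (pa v) + 1 = dep hp v := by
  have h0 : dep hp v ≠ 0 := fun h => hv ((dep_eq_zero_iff hp hr).1 h)
  have h1 : pa^[dep hp v - 1] (pa v) = r := by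
    rw [← Function.iterate_succ_apply]
    have h5 : (dep hp v - 1).succ = dep hp v := by omega
    rw [h5]; exact dep_spec hp v
  have h2 : dep hp (pa v) ≤ dep hp v - 1 := dep_min hp h1
  have h3 : pa^[dep hp (pa v) + 1] v = r := by
    rw [Function.iterate_succ_apply]; exact dep_spec hp (pa v)
  have h4 : dep hp v ≤ dep hp (pa v) + 1 := dep_min hp h3
  omega

lemma dep_iterate {v : V} : ∀ i, i ≤ dep hp v → dep hp (pa^[i] v) = dep hp v - i := by
  intro i
  induction i with
  | zero => simp
  | succ i ih =>
    intro hi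
    have hi' : i ≤ dep hp v := by omega
    have hx : dep hp (pa^[i] v) = dep hp v - i := ih hi'
    have hxr : pa^[i] v ≠ r := by
      intro h
      rw [h, dep_r hp hr] at hx
      omega
    rw [Function.iterate_succ_apply']
    have := dep_pa hp hr hxr
    omega

lemma anc_dep_le {u w : V} (h : Anc pa u w) : dep hp u ≤ dep hp w := by
  obtain ⟨n, hn⟩ := h
  by_cases hn' : n ≤ dep hp w
  · rw [← hn, dep_iterate hp hr n hn']; omega
  · have : pa^[n] w = r := iterate_of_ge hp hr (by omega)
    rw [this] at hn
    rw [← hn, dep_r hp hr]; omega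

lemma anc_canon {u w : V} (h : Anc pa u w) :
    pa^[dep hp w - dep hp u] w = u := by
  obtain ⟨n, hn⟩ := h
  by_cases hn' : n ≤ dep hp w
  · have := dep_iterate hp hr n hn'
    rw [hn] at this
    have : dep hp w - dep hp u = n := by omega
    rw [this]; exact hn
  · have hu : u = r := by
      have : pa^[n] w = r := iterate_of_ge hp hr (by omega)
      rw [this] at hn; exact hn.symm
    subst hu
    rw [dep_r hp hr]
    simpa using dep_spec hp w

omit hp hr in
lemma anc_refl (u : V) : Anc pa u u := ⟨0, rfl⟩

lemma anc_root (w : V) : Anc pa r w := ⟨dep hp w, dep_spec hp w⟩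

lemma anc_antisymm {u w : V} (h1 : Anc pa u w) (h2 : Anc pa w u) : u = w := by
  have l1 := anc_dep_le hp hr h1
  have l2 := anc_dep_le hp hr h2
  have hd : dep hp u = dep hp w := le_antisymm l1 l2
  have := anc_canon hp hr h1
  rw [hd] at this
  simpa using this.symm

lemma not_anc_pa_self {v : V} (hv : v ≠ r) : ¬ Anc pa v (pa v) := by
  intro h
  have := anc_dep_le hp hr h
  have := dep_pa hp hr hv
  omega

omit hp hr in
lemma anc_of_anc_pa {a w : V} (h : Anc pa a (pa w)) : Anc pa a w := by
  obtain ⟨n, hn⟩ := h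
  exact ⟨n + 1, by rwa [Function.iterate_succ_apply]⟩

lemma ne_r_of_not_anc {u w : V} (h : ¬ Anc pa u w) : u ≠ r := by
  rintro rfl; exact h (anc_root hp hr w)


section Graph
variable {G : SimpleGraph V}

lemma exists_anc_iterate (u w : V) : ∃ k, Anc pa (pa^[k] u) w :=
  ⟨dep hp u, by rw [dep_spec hp u]; exact anc_root hp hr w⟩

/-- first iterate of `u` that is an ancestor-or-self of `w` -/
def meetK (u w : V) : ℕ := Nat.find (exists_anc_iterate hp hr u w)

lemma meetK_spec (u w : V) : Anc pa (pa^[meetK hp hr u w] u) w :=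
  Nat.find_spec (exists_anc_iterate hp hr u w)

lemma meetK_min {u w : V} {n : ℕ} (h : n < meetK hp hr u w) : ¬ Anc pa (pa^[n] u) w :=
  Nat.find_min (exists_anc_iterate hp hr u w) h

lemma meetK_le {u w : V} {n : ℕ} (h : Anc pa (pa^[n] u) w) : meetK hp hr u w ≤ n :=
  Nat.find_le h

lemma upWalk (hadj : ∀ v, v ≠ r → G.Adj (pa v) v) :
    ∀ (n : ℕ) (v : V), n ≤ dep hp v → ∃ p : G.Walk v (pa^[n] v),
      p.support = (List.range (n+1)).map (fun i => pa^[i] v) := by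
  intro n
  induction n with
  | zero =>
    intro v _
    exact ⟨(SimpleGraph.Walk.nil : G.Walk v v).copy rfl (by simp), by simp⟩
  | succ n ih =>
    intro v hv
    have hvr : v ≠ r := by
      intro h; subst h; rw [dep_r hp hr] at hv; omega
    have hd : n ≤ dep hp (pa v) := by have := dep_pa hp hr hvr; omega
    obtain ⟨p, hps⟩ := ih (pa v) hd
    refine ⟨SimpleGraph.Walk.cons ((hadj v hvr).symm)
      (p.copy rfl (Function.iterate_succ_apply pa n v).symm), ?_⟩
    rw [SimpleGraph.Walk.support_cons, SimpleGraph.Walk.support_copy, hps]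
    have hfun : (fun i => pa^[i] v) ∘ Nat.succ = fun i => pa^[i] (pa v) := by
      funext i
      simp [Function.comp, Function.iterate_succ_apply]
    have hr2 : List.map (fun i => pa^[i] v) (List.range (n+1+1))
        = v :: List.map (fun i => pa^[i] (pa v)) (List.range (n+1)) := by
      rw [List.range_succ_eq_map, List.map_cons, List.map_map, hfun]
      simp
    rw [hr2]

lemma dist_formula (hG : G.IsTree) (hadj : ∀ v, v ≠ r → G.Adj (pa v) v) (u w : V) :
    G.dist u w = meetK hp hr u w + (dep hp w - dep hp (pa^[meetK hp hr u w] u)) := by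
  set k := meetK hp hr u w with hkdef
  have hkw : Anc pa (pa^[k] u) w := meetK_spec hp hr u w
  set m := pa^[k] u with hmdef
  have hk_le : k ≤ dep hp u :=
    meetK_le hp hr (by rw [dep_spec hp u]; exact anc_root hp hr w)
  set j := dep hp w - dep hp m with hjdef
  have hjw : pa^[j] w = m := anc_canon hp hr hkw
  have hj_le : j ≤ dep hp w := Nat.sub_le _ _
  have hdm : dep hp m ≤ dep hp w := anc_dep_le hp hr hkw
  obtain ⟨p, hps⟩ := upWalk hp hr hadj k u hk_le
  obtain ⟨q, hqs⟩ := upWalk hp hr hadj j w hj_le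
  let c : G.Walk u w := ((p.copy rfl hmdef.symm).append ((q.copy rfl hjw).reverse))
  have hplen : p.length = k := by
    have := congrArg List.length hps
    rw [SimpleGraph.Walk.length_support] at this
    simpa using this
  have hqlen : q.length = j := by
    have := congrArg List.length hqs
    rw [SimpleGraph.Walk.length_support] at this
    simpa using this
  have hclen : c.length = k + j := by
    simp [c, hplen, hqlen]
  -- supports
  have hcsupp : c.support
      = (List.range (k+1)).map (fun i => pa^[i] u)
        ++ ((List.range j).reverse.map (fun i => pa^[i] w)) := by
    rw [SimpleGraph.Walk.support_append, SimpleGraph.Walk.support_copy, hps]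
    congr 1
    rw [SimpleGraph.Walk.support_reverse, SimpleGraph.Walk.support_copy, hqs,
      ← List.map_reverse, List.range_succ, List.reverse_append]
    simp
  have hinj_u : ∀ i ∈ List.range (k+1), ∀ i' ∈ List.range (k+1),
      pa^[i] u = pa^[i'] u → i = i' := by
    intro i hi i' hi' he
    rw [List.mem_range] at hi hi'
    have d1 := dep_iterate hp hr i (by omega : i ≤ dep hp u)
    have d2 := dep_iterate hp hr i' (by omega : i' ≤ dep hp u)
    rw [he] at d1
    omega
  have hinj_w : ∀ i ∈ (List.range j).reverse, ∀ i' ∈ (List.range j).reverse,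
      pa^[i] w = pa^[i'] w → i = i' := by
    intro i hi i' hi' he
    rw [List.mem_reverse, List.mem_range] at hi hi'
    have d1 := dep_iterate hp hr i (by omega : i ≤ dep hp w)
    have d2 := dep_iterate hp hr i' (by omega : i' ≤ dep hp w)
    rw [he] at d1
    omega
  have hdisj : ∀ a, a ∈ (List.range (k+1)).map (fun i => pa^[i] u) →
      a ∉ (List.range j).reverse.map (fun i => pa^[i] w) := by
    intro a ha hb
    rw [List.mem_map] at ha hb
    obtain ⟨i, hi, rfl⟩ := ha
    obtain ⟨i', hi', he⟩ := hb
    rw [List.mem_range] at hi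
    rw [List.mem_reverse, List.mem_range] at hi'
    have hanc : Anc pa (pa^[i] u) w := ⟨i', he⟩
    have hik : ¬ i < k := fun hlt => meetK_min hp hr hlt hanc
    have hieq : i = k := by omega
    subst hieq
    -- so pa^[i] u = m, and pa^[i'] w = m with i' < j
    have d1 := dep_iterate hp hr i' (by omega : i' ≤ dep hp w)
    rw [he, ← hmdef] at d1
    omega
  have hpath : c.IsPath := by
    rw [SimpleGraph.Walk.isPath_def, hcsupp]
    rw [List.nodup_append]
    refine ⟨List.Nodup.map_on hinj_u (List.nodup_range (n := k+1)), 
      List.Nodup.map_on hinj_w (List.nodup_reverse.2 (List.nodup_range (n := j))), ?_⟩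
    intro a ha b hb hab
    subst hab
    exact hdisj a ha hb
  -- dist ≤ length
  have hle : G.dist u w ≤ k + j := by
    have := SimpleGraph.dist_le c
    omega
  -- length ≤ dist
  have hge : k + j ≤ G.dist u w := by
    obtain ⟨q0, hq0⟩ := (hG.isConnected.preconnected u w).exists_walk_length_eq_dist
    have hbp : q0.bypass.IsPath := SimpleGraph.Walk.bypass_isPath q0
    have huniq : (⟨c, hpath⟩ : G.Path u w) = ⟨q0.bypass, hbp⟩ :=
      hG.IsAcyclic.path_unique _ _
    have hceq : c = q0.bypass := congrArg Subtype.val huniq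
    have : c.length ≤ q0.length := by
      rw [hceq]; exact SimpleGraph.Walk.length_bypass_le q0
    omega
  omega

lemma dist_step (hG : G.IsTree) (hadj : ∀ v, v ≠ r → G.Adj (pa v) v)
    {u w : V} (hnanc : ¬ Anc pa u w) :
    G.dist u w = G.dist (pa u) w + 1 := by
  set k := meetK hp hr u w with hkdef
  have hkpos : k ≠ 0 := by
    intro h
    have := meetK_spec hp hr u w
    rw [← hkdef, h] at this
    simpa using hnanc this
  have hstep : meetK hp hr (pa u) w = k - 1 := by
    have h1 : meetK hp hr (pa u) w ≤ k - 1 := by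
      apply meetK_le
      rw [← Function.iterate_succ_apply]
      have h5 : (k-1).succ = k := by omega
      rw [h5]
      exact meetK_spec hp hr u w
    have h2 : ¬ meetK hp hr (pa u) w < k - 1 := by
      intro hlt
      have hs := meetK_spec hp hr (pa u) w
      rw [← Function.iterate_succ_apply] at hs
      exact meetK_min hp hr
        (by omega : meetK hp hr (pa u) w + 1 < k) hs
    omega
  have hm : pa^[meetK hp hr (pa u) w] (pa u) = pa^[k] u := by
    rw [hstep, ← Function.iterate_succ_apply]
    congr 1
    omega
  rw [dist_formula hp hr hG hadj u w, dist_formula hp hr hG hadj (pa u) w, hm, hstep, ← hkdef]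
  omega

end Graph
end AncGraph


/-- measurability of a sum with a random number of terms -/
lemma meas_sum_range {Ω : Type*} {m : MeasurableSpace Ω} {f : Ω → ℕ} (hf : Measurable[m] f)
    {g : ℕ → Ω → ℕ} (hg : ∀ i, Measurable[m] (g i)) :
    Measurable[m] (fun ω => ∑ i ∈ Finset.range (f ω), g i ω) := by
  apply measurable_to_countable'
  intro k
  have h : (fun ω => ∑ i ∈ Finset.range (f ω), g i ω) ⁻¹' {k}
      = ⋃ n, f ⁻¹' {n} ∩ (fun ω => ∑ i ∈ Finset.range n, g i ω) ⁻¹' {k} := by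
    ext ω
    simp only [Set.mem_preimage, Set.mem_singleton_iff, Set.mem_iUnion, Set.mem_inter_iff]
    constructor
    · intro h; exact ⟨f ω, rfl, h⟩
    · rintro ⟨n, hn, h⟩; rw [← h, hn]
  rw [h]
  exact MeasurableSet.iUnion fun n => (hf (measurableSet_singleton n)).inter
    ((Finset.measurable_sum _ (fun i _ => hg i)) (measurableSet_singleton k))

lemma lintegral_nat_eq_tsum {Ω : Type*} [MeasureSpace Ω] {X : Ω → ℕ} (hX : Measurable X) :
    ∫⁻ ω, (X ω : ℝ≥0∞) ∂ℙ = ∑' k : ℕ, (k : ℝ≥0∞) * ℙ {ω | X ω = k} := by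
  have hpt : ∀ ω, (X ω : ℝ≥0∞) = ∑' k : ℕ, Set.indicator (X ⁻¹' {k}) (fun _ => (k : ℝ≥0∞)) ω := by
    intro ω
    rw [tsum_eq_single (X ω)]
    · simp [Set.indicator_apply]
    · intro k hk
      simp [Set.indicator_apply]
      intro h
      exact absurd h.symm hk
  calc ∫⁻ ω, (X ω : ℝ≥0∞) ∂ℙ
      = ∫⁻ ω, ∑' k : ℕ, Set.indicator (X ⁻¹' {k}) (fun _ => (k : ℝ≥0∞)) ω ∂ℙ := by
        exact lintegral_congr hpt
    _ = ∑' k : ℕ, ∫⁻ ω, Set.indicator (X ⁻¹' {k}) (fun _ => (k : ℝ≥0∞)) ω ∂ℙ :=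
        lintegral_tsum fun k => (measurable_const.indicator (hX (measurableSet_singleton k))).aemeasurable
    _ = ∑' k : ℕ, (k : ℝ≥0∞) * ℙ {ω | X ω = k} := by
        refine tsum_congr fun k => ?_
        rw [lintegral_indicator_const (hX (measurableSet_singleton k))]
        rfl

lemma lintegral_nat_sq_eq_tsum {Ω : Type*} [MeasureSpace Ω] {X : Ω → ℕ} (hX : Measurable X) :
    ∫⁻ ω, (X ω : ℝ≥0∞) * (X ω : ℝ≥0∞) ∂ℙ = ∑' k : ℕ, ((k : ℝ≥0∞) * k) * ℙ {ω | X ω = k} := by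
  have hpt : ∀ ω, (X ω : ℝ≥0∞) * (X ω : ℝ≥0∞)
      = ∑' k : ℕ, Set.indicator (X ⁻¹' {k}) (fun _ => ((k : ℝ≥0∞) * k)) ω := by
    intro ω
    rw [tsum_eq_single (X ω)]
    · simp [Set.indicator_apply]
    · intro k hk
      simp [Set.indicator_apply]
      intro h
      exact absurd h.symm hk
  calc ∫⁻ ω, (X ω : ℝ≥0∞) * (X ω : ℝ≥0∞) ∂ℙ
      = ∫⁻ ω, ∑' k : ℕ, Set.indicator (X ⁻¹' {k}) (fun _ => ((k : ℝ≥0∞) * k)) ω ∂ℙ :=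
        lintegral_congr hpt
    _ = ∑' k : ℕ, ∫⁻ ω, Set.indicator (X ⁻¹' {k}) (fun _ => ((k : ℝ≥0∞) * k)) ω ∂ℙ :=
        lintegral_tsum fun k => (measurable_const.indicator (hX (measurableSet_singleton k))).aemeasurable
    _ = ∑' k : ℕ, ((k : ℝ≥0∞) * k) * ℙ {ω | X ω = k} := by
        refine tsum_congr fun k => ?_
        rw [lintegral_indicator_const (hX (measurableSet_singleton k))]
        rfl

section PoissonSeries
variable {t : ℝ}

lemma exp_tsum : ∑' k : ℕ, t ^ k / (Nat.factorial k) = Real.exp t := by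
  rw [Real.exp_eq_exp_ℝ, NormedSpace.exp_eq_tsum_div]

lemma summable_pois0 : Summable (fun k : ℕ => t ^ k / (Nat.factorial k)) :=
  Real.summable_pow_div_factorial t

lemma pois1_succ (k : ℕ) :
    ((k+1 : ℕ) : ℝ) * (t ^ (k+1) / (Nat.factorial (k+1))) = t * (t ^ k / (Nat.factorial k)) := by
  have h : (Nat.factorial (k+1) : ℝ) = (k+1) * Nat.factorial k := by
    rw [Nat.factorial_succ]; push_cast; ring
  rw [h]
  have h1 : (Nat.factorial k : ℝ) ≠ 0 := Nat.cast_ne_zero.2 (Nat.factorial_ne_zero k)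
  have h2 : ((k:ℝ)+1) ≠ 0 := by positivity
  field_simp
  push_cast
  ring

lemma summable_pois1 : Summable (fun k : ℕ => (k : ℝ) * (t ^ k / (Nat.factorial k))) := by
  rw [← summable_nat_add_iff 1]
  exact (summable_pois0.mul_left t).congr (fun k => (pois1_succ k).symm)

lemma tsum_pois1 : ∑' k : ℕ, (k : ℝ) * (t ^ k / (Nat.factorial k)) = t * Real.exp t := by
  rw [Summable.tsum_eq_zero_add summable_pois1]
  simp only [Nat.cast_zero, zero_mul, zero_add]
  have : ∀ k : ℕ, ((k+1 : ℕ) : ℝ) * (t ^ (k+1) / (Nat.factorial (k+1)))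
      = t * (t ^ k / (Nat.factorial k)) := fun k => pois1_succ k
  calc ∑' k : ℕ, ((k+1 : ℕ) : ℝ) * (t ^ (k+1) / (Nat.factorial (k+1)))
      = ∑' k : ℕ, t * (t ^ k / (Nat.factorial k)) := tsum_congr this
    _ = t * Real.exp t := by rw [tsum_mul_left, exp_tsum]

lemma pois2_succ (k : ℕ) :
    (((k+1 : ℕ) : ℝ) * ((k+1 : ℕ) : ℝ)) * (t ^ (k+1) / (Nat.factorial (k+1)))
      = t * ((k : ℝ) * (t ^ k / (Nat.factorial k)) + t ^ k / (Nat.factorial k)) := by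
  have h : (((k+1 : ℕ) : ℝ) * ((k+1 : ℕ) : ℝ)) * (t ^ (k+1) / (Nat.factorial (k+1)))
      = ((k+1 : ℕ) : ℝ) * (((k+1 : ℕ) : ℝ) * (t ^ (k+1) / (Nat.factorial (k+1)))) := by ring
  rw [h, pois1_succ]
  push_cast
  ring

lemma summable_pois2 :
    Summable (fun k : ℕ => ((k : ℝ) * (k : ℝ)) * (t ^ k / (Nat.factorial k))) := by
  rw [← summable_nat_add_iff 1]
  exact ((summable_pois1.add summable_pois0).mul_left t).congr (fun k => (pois2_succ k).symm)

lemma tsum_pois2 :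
    ∑' k : ℕ, ((k : ℝ) * (k : ℝ)) * (t ^ k / (Nat.factorial k)) = (t + t^2) * Real.exp t := by
  rw [Summable.tsum_eq_zero_add summable_pois2]
  simp only [Nat.cast_zero, zero_mul, mul_zero, zero_add]
  calc ∑' k : ℕ, (((k+1 : ℕ) : ℝ) * ((k+1 : ℕ) : ℝ)) * (t ^ (k+1) / (Nat.factorial (k+1)))
      = ∑' k : ℕ, t * ((k : ℝ) * (t ^ k / (Nat.factorial k)) + t ^ k / (Nat.factorial k)) :=
        tsum_congr fun k => pois2_succ k
    _ = t * (∑' k : ℕ, ((k : ℝ) * (t ^ k / (Nat.factorial k)) + t ^ k / (Nat.factorial k))) := tsum_mul_left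
    _ = t * (t * Real.exp t + Real.exp t) := by
        rw [Summable.tsum_add summable_pois1 summable_pois0, tsum_pois1, exp_tsum]
    _ = (t + t^2) * Real.exp t := by ring

end PoissonSeries

/-- first moment of a Poisson random variable, in `ℝ≥0∞` -/
lemma poisson_m1 {Ω : Type*} [MeasureSpace Ω] {X : Ω → ℕ} {t : ℝ} (ht : 0 ≤ t)
    (hX : Measurable X)
    (hpmf : ∀ k : ℕ, (ℙ : Measure Ω) {ω | X ω = k}
      = ENNReal.ofReal (Real.exp (-t) * t ^ k / (Nat.factorial k))) :
    ∫⁻ ω, (X ω : ℝ≥0∞) ∂ℙ = ENNReal.ofReal t := by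
  rw [lintegral_nat_eq_tsum hX]
  have h1 : ∀ k : ℕ, (k : ℝ≥0∞) * ℙ {ω | X ω = k}
      = ENNReal.ofReal ((k : ℝ) * (Real.exp (-t) * t ^ k / (Nat.factorial k))) := by
    intro k
    rw [hpmf k, ← ENNReal.ofReal_natCast k, ← ENNReal.ofReal_mul (by positivity)]
  rw [tsum_congr h1, ← ENNReal.ofReal_tsum_of_nonneg]
  · congr 1
    have h2 : ∀ k : ℕ, (k : ℝ) * (Real.exp (-t) * t ^ k / (Nat.factorial k))
        = Real.exp (-t) * ((k : ℝ) * (t ^ k / (Nat.factorial k))) := fun k => by ring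
    rw [tsum_congr h2, tsum_mul_left, tsum_pois1, Real.exp_neg]
    have := Real.exp_ne_zero t
    field_simp
  · intro k; positivity
  · have h2 : (fun k : ℕ => (k : ℝ) * (Real.exp (-t) * t ^ k / (Nat.factorial k)))
        = fun k : ℕ => Real.exp (-t) * ((k : ℝ) * (t ^ k / (Nat.factorial k))) :=
      funext fun k => by ring
    rw [h2]
    exact summable_pois1.mul_left _

/-- second moment of a Poisson random variable, in `ℝ≥0∞` -/
lemma poisson_m2 {Ω : Type*} [MeasureSpace Ω] {X : Ω → ℕ} {t : ℝ} (ht : 0 ≤ t)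
    (hX : Measurable X)
    (hpmf : ∀ k : ℕ, (ℙ : Measure Ω) {ω | X ω = k}
      = ENNReal.ofReal (Real.exp (-t) * t ^ k / (Nat.factorial k))) :
    ∫⁻ ω, (X ω : ℝ≥0∞) * (X ω : ℝ≥0∞) ∂ℙ = ENNReal.ofReal (t + t^2) := by
  rw [lintegral_nat_sq_eq_tsum hX]
  have h1 : ∀ k : ℕ, ((k : ℝ≥0∞) * k) * ℙ {ω | X ω = k}
      = ENNReal.ofReal (((k : ℝ) * k) * (Real.exp (-t) * t ^ k / (Nat.factorial k))) := by
    intro k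
    rw [hpmf k, ← ENNReal.ofReal_natCast k, ← ENNReal.ofReal_mul (by positivity),
      ← ENNReal.ofReal_mul (by positivity)]
  rw [tsum_congr h1, ← ENNReal.ofReal_tsum_of_nonneg]
  · congr 1
    have h2 : ∀ k : ℕ, ((k : ℝ) * k) * (Real.exp (-t) * t ^ k / (Nat.factorial k))
        = Real.exp (-t) * (((k : ℝ) * k) * (t ^ k / (Nat.factorial k))) := fun k => by ring
    rw [tsum_congr h2, tsum_mul_left, tsum_pois2, Real.exp_neg]
    have := Real.exp_ne_zero t
    field_simp
  · intro k; positivity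
  · have h2 : (fun k : ℕ => ((k : ℝ) * k) * (Real.exp (-t) * t ^ k / (Nat.factorial k)))
        = fun k : ℕ => Real.exp (-t) * (((k : ℝ) * k) * (t ^ k / (Nat.factorial k))) :=
      funext fun k => by ring
    rw [h2]
    exact summable_pois2.mul_left _


section Indep
variable {V : Type*} {Ω : Type*} [MeasureSpace Ω] [IsProbabilityMeasure (ℙ : Measure Ω)]
variable (L : V → Ω → ℕ) (I : V → ℕ → Ω → Bool)

/-- the full independent family -/
def fam : V ⊕ V × ℕ → Ω → ℕ := Sum.elim L fun p ω => if I p.1 p.2 ω then 1 else 0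

/-- σ-algebra generated by a subfamily -/
def Fσ (s : Set (V ⊕ V × ℕ)) : MeasurableSpace Ω :=
  ⨆ j ∈ s, MeasurableSpace.comap (fam L I j) inferInstance

variable {L I}

lemma Fσ_le (hmeas : ∀ j, Measurable (fam L I j)) (s : Set (V ⊕ V × ℕ)) :
    Fσ L I s ≤ (inferInstance : MeasurableSpace Ω) :=
  iSup₂_le fun j _ => measurable_iff_comap_le.1 (hmeas j)

lemma Fσ_mono {s t : Set (V ⊕ V × ℕ)} (h : s ⊆ t) : Fσ L I s ≤ Fσ L I t :=
  biSup_mono h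

lemma meas_fam_of_mem {s : Set (V ⊕ V × ℕ)} {j} (hj : j ∈ s) :
    Measurable[Fσ L I s] (fam L I j) := by
  have h : MeasurableSpace.comap (fam L I j) inferInstance ≤ Fσ L I s :=
    le_biSup (fun j => MeasurableSpace.comap (fam L I j) inferInstance) hj
  exact (Measurable.of_comap_le le_rfl).mono h le_rfl

lemma meas_famE_of_mem {s : Set (V ⊕ V × ℕ)} {j} (hj : j ∈ s) :
    Measurable[Fσ L I s] (fun ω => ((fam L I j ω : ℕ) : ℝ≥0∞)) :=
  (measurable_from_top (f := fun n : ℕ => (n : ℝ≥0∞))).comp (meas_fam_of_mem hj)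

lemma indepfun_of_fσ (hmeas : ∀ j, Measurable (fam L I j))
    (hind : iIndepFun (fam L I) ℙ)
    {s t : Set (V ⊕ V × ℕ)} (hst : Disjoint s t)
    {β γ : Type*} [MeasurableSpace β] [MeasurableSpace γ] {X : Ω → β} {Y : Ω → γ}
    (hX : Measurable[Fσ L I s] X) (hY : Measurable[Fσ L I t] Y) : IndepFun X Y ℙ := by
  rw [IndepFun_iff_Indep]
  have h := indep_iSup_of_disjoint (fun j => measurable_iff_comap_le.1 (hmeas j)) hind.iIndep hst
  exact indep_of_indep_of_le_left
    (indep_of_indep_of_le_right h (measurable_iff_comap_le.1 hY))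
    (measurable_iff_comap_le.1 hX)

lemma lintegral_mul_fσ (hmeas : ∀ j, Measurable (fam L I j))
    (hind : iIndepFun (fam L I) ℙ)
    {s t : Set (V ⊕ V × ℕ)} (hst : Disjoint s t) {X Y : Ω → ℝ≥0∞}
    (hX : Measurable[Fσ L I s] X) (hY : Measurable[Fσ L I t] Y) :
    ∫⁻ ω, X ω * Y ω ∂ℙ = (∫⁻ ω, X ω ∂ℙ) * ∫⁻ ω, Y ω ∂ℙ := by
  have h := lintegral_mul_eq_lintegral_mul_lintegral_of_indepFun
    (μ := ℙ) (f := X) (g := Y)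
    (hX.mono (Fσ_le hmeas s) le_rfl) (hY.mono (Fσ_le hmeas t) le_rfl)
    (indepfun_of_fσ hmeas hind hst hX hY)
  simpa using h

lemma lintegral_fam_inr {α : ℝ} (hIb : ∀ v i, IsBernoulliRV (I v i) α) (u : V) (i : ℕ) :
    ∫⁻ ω, ((fam L I (Sum.inr (u, i)) ω : ℕ) : ℝ≥0∞) ∂ℙ = ENNReal.ofReal α := by
  have h : (fun ω => ((fam L I (Sum.inr (u, i)) ω : ℕ) : ℝ≥0∞))
      = (I u i ⁻¹' {true}).indicator (fun _ => (1 : ℝ≥0∞)) := by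
    funext ω
    by_cases h : I u i ω <;> simp [fam, Set.indicator_apply, h, Set.mem_preimage]
  rw [h, lintegral_indicator_const ((hIb u i).1 (measurableSet_singleton true)), one_mul]
  exact (hIb u i).2

lemma peel (hmeas : ∀ j, Measurable (fam L I j))
    (hind : iIndepFun (fam L I) ℙ)
    {s : Set (V ⊕ V × ℕ)} {j0 : V ⊕ V × ℕ} (hj0 : j0 ∉ s) {g : Ω → ℝ≥0∞}
    (hg : Measurable[Fσ L I s] g) :
    ∫⁻ ω, ((fam L I j0 ω : ℕ) : ℝ≥0∞) * g ω ∂ℙ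
      = (∫⁻ ω, ((fam L I j0 ω : ℕ) : ℝ≥0∞) ∂ℙ) * ∫⁻ ω, g ω ∂ℙ :=
  lintegral_mul_fσ hmeas hind (Set.disjoint_singleton_left.2 hj0)
    (meas_famE_of_mem (Set.mem_singleton j0)) hg

lemma cast_sum_mul_eq_tsum (X : Ω → ℕ) (c : ℕ → Ω → ℝ≥0∞) (Y : Ω → ℝ≥0∞) (ω : Ω) :
    (∑ i ∈ Finset.range (X ω), c i ω) * Y ω
      = ∑' i : ℕ, c i ω * (if i < X ω then Y ω else 0) := by
  rw [tsum_eq_sum (s := Finset.range (X ω))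
    (fun i hi => by rw [if_neg (fun h => hi (Finset.mem_range.2 h)), mul_zero])]
  rw [Finset.sum_mul]
  refine Finset.sum_congr rfl fun i hi => ?_
  rw [if_pos (Finset.mem_range.1 hi)]

lemma tsum_ite_lt (X : Ω → ℕ) (Y : Ω → ℝ≥0∞) (ω : Ω) :
    ∑' i : ℕ, (if i < X ω then Y ω else 0) = (X ω : ℝ≥0∞) * Y ω := by
  rw [tsum_eq_sum (s := Finset.range (X ω))
    (fun i hi => by rw [if_neg (fun h => hi (Finset.mem_range.2 h))])]
  rw [Finset.sum_congr rfl (fun i hi => if_pos (Finset.mem_range.1 hi)),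
    Finset.sum_const, Finset.card_range, nsmul_eq_mul]

lemma meas_ite_lt {s : Set (V ⊕ V × ℕ)} {X : Ω → ℕ} (hX : Measurable[Fσ L I s] X)
    {Y : Ω → ℝ≥0∞} (hY : Measurable[Fσ L I s] Y) (i : ℕ) :
    Measurable[Fσ L I s] (fun ω => if i < X ω then Y ω else 0) := by
  refine Measurable.ite ?_ hY measurable_const
  exact hX MeasurableSet.of_discrete

/-- the key thinning identity: `E[(α∘X)·Y] = α·E[X·Y]` -/
lemma thin_lintegral (hmeas : ∀ j, Measurable (fam L I j))
    (hind : iIndepFun (fam L I) ℙ)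
    {α : ℝ} (hIb : ∀ v i, IsBernoulliRV (I v i) α)
    {s : Set (V ⊕ V × ℕ)} {u : V} (hu : ∀ i : ℕ, Sum.inr (u, i) ∉ s)
    {X Y : Ω → ℕ} (hX : Measurable[Fσ L I s] X) (hY : Measurable[Fσ L I s] Y) :
    ∫⁻ ω, ((∑ i ∈ Finset.range (X ω), fam L I (Sum.inr (u, i)) ω : ℕ) : ℝ≥0∞)
        * (Y ω : ℝ≥0∞) ∂ℙ
      = ENNReal.ofReal α * ∫⁻ ω, (X ω : ℝ≥0∞) * (Y ω : ℝ≥0∞) ∂ℙ := by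
  have hYE : Measurable[Fσ L I s] (fun ω => (Y ω : ℝ≥0∞)) :=
    (measurable_from_top (f := fun n : ℕ => (n : ℝ≥0∞))).comp hY
  have hpt : ∀ ω, ((∑ i ∈ Finset.range (X ω), fam L I (Sum.inr (u, i)) ω : ℕ) : ℝ≥0∞)
      * (Y ω : ℝ≥0∞)
      = ∑' i : ℕ, ((fam L I (Sum.inr (u, i)) ω : ℕ) : ℝ≥0∞)
          * (if i < X ω then (Y ω : ℝ≥0∞) else 0) := by
    intro ω
    rw [Nat.cast_sum]
    exact cast_sum_mul_eq_tsum X (fun i ω => ((fam L I (Sum.inr (u, i)) ω : ℕ) : ℝ≥0∞))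
      (fun ω => (Y ω : ℝ≥0∞)) ω
  rw [lintegral_congr hpt, lintegral_tsum (fun i => Measurable.aemeasurable ?_)]
  swap
  · exact ((measurable_from_top (f := fun n : ℕ => (n : ℝ≥0∞))).comp
      (hmeas (Sum.inr (u, i)))).mul
      ((meas_ite_lt hX hYE i).mono (Fσ_le hmeas s) le_rfl)
  have hterm : ∀ i : ℕ, ∫⁻ ω, ((fam L I (Sum.inr (u, i)) ω : ℕ) : ℝ≥0∞)
      * (if i < X ω then (Y ω : ℝ≥0∞) else 0) ∂ℙ
      = ENNReal.ofReal α * ∫⁻ ω, (if i < X ω then (Y ω : ℝ≥0∞) else 0) ∂ℙ := by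
    intro i
    rw [peel hmeas hind (hu i) (meas_ite_lt hX hYE i), lintegral_fam_inr hIb]
  rw [tsum_congr hterm, ENNReal.tsum_mul_left]
  congr 1
  rw [← lintegral_tsum (fun i => Measurable.aemeasurable
    ((meas_ite_lt hX hYE i).mono (Fσ_le hmeas s) le_rfl))]
  refine lintegral_congr fun ω => ?_
  exact tsum_ite_lt X (fun ω => (Y ω : ℝ≥0∞)) ω


lemma lintegral_ite_lt (hmeas : ∀ j, Measurable (fam L I j))
    {s : Set (V ⊕ V × ℕ)} {X : Ω → ℕ} (hX : Measurable[Fσ L I s] X) (i : ℕ) :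
    ∫⁻ ω, (if i < X ω then (1 : ℝ≥0∞) else 0) ∂ℙ = ℙ {ω | i < X ω} := by
  have hXg : Measurable X := hX.mono (Fσ_le hmeas s) le_rfl
  have hA : MeasurableSet {ω | i < X ω} := hXg MeasurableSet.of_discrete
  have h : (fun ω => if i < X ω then (1 : ℝ≥0∞) else 0)
      = {ω | i < X ω}.indicator (fun _ => (1 : ℝ≥0∞)) := by
    funext ω
    by_cases hlt : i < X ω <;> simp [Set.indicator_apply, hlt]
  rw [h, lintegral_indicator_const hA, one_mul]

lemma lintegral_ite_lt2 (hmeas : ∀ j, Measurable (fam L I j))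
    {s : Set (V ⊕ V × ℕ)} {X : Ω → ℕ} (hX : Measurable[Fσ L I s] X) (i j : ℕ) :
    ∫⁻ ω, (if i < X ω then (1 : ℝ≥0∞) else 0) * (if j < X ω then (1 : ℝ≥0∞) else 0) ∂ℙ
      = ℙ ({ω | i < X ω} ∩ {ω | j < X ω}) := by
  have hXg : Measurable X := hX.mono (Fσ_le hmeas s) le_rfl
  have hA : MeasurableSet ({ω | i < X ω} ∩ {ω | j < X ω}) :=
    (hXg MeasurableSet.of_discrete).inter (hXg MeasurableSet.of_discrete)
  have h : (fun ω => (if i < X ω then (1 : ℝ≥0∞) else 0) * (if j < X ω then (1 : ℝ≥0∞) else 0))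
      = ({ω | i < X ω} ∩ {ω | j < X ω}).indicator (fun _ => (1 : ℝ≥0∞)) := by
    funext ω
    by_cases h1 : i < X ω <;> by_cases h2 : j < X ω <;>
      simp [Set.indicator_apply, h1, h2, Set.mem_inter_iff]
  rw [h, lintegral_indicator_const hA, one_mul]

/-- second moment of the binomial thinning -/
lemma thin_sq_lintegral (hmeas : ∀ j, Measurable (fam L I j))
    (hind : iIndepFun (fam L I) ℙ)
    {α : ℝ} (hα0 : 0 ≤ α) (hα1 : α ≤ 1) (hIb : ∀ v i, IsBernoulliRV (I v i) α)
    {s : Set (V ⊕ V × ℕ)} {u : V} (hu : ∀ i : ℕ, Sum.inr (u, i) ∉ s)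
    {X : Ω → ℕ} (hX : Measurable[Fσ L I s] X) :
    ∫⁻ ω, ((∑ i ∈ Finset.range (X ω), fam L I (Sum.inr (u, i)) ω : ℕ) : ℝ≥0∞)
        * ((∑ i ∈ Finset.range (X ω), fam L I (Sum.inr (u, i)) ω : ℕ) : ℝ≥0∞) ∂ℙ
      = ENNReal.ofReal (α ^ 2) * ∫⁻ ω, (X ω : ℝ≥0∞) * (X ω : ℝ≥0∞) ∂ℙ
        + ENNReal.ofReal (α - α ^ 2) * ∫⁻ ω, (X ω : ℝ≥0∞) ∂ℙ := by
  classical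
  set b : ℕ → Ω → ℝ≥0∞ := fun i ω => ((fam L I (Sum.inr (u, i)) ω : ℕ) : ℝ≥0∞) with hbdef
  set h : ℕ → Ω → ℝ≥0∞ := fun i ω => if i < X ω then (1 : ℝ≥0∞) else 0 with hhdef
  have hmeas_b : ∀ i, Measurable (b i) :=
    fun i => (measurable_from_top (f := fun n : ℕ => (n : ℝ≥0∞))).comp (hmeas (Sum.inr (u, i)))
  have hmeas_hF : ∀ i, Measurable[Fσ L I s] (h i) :=
    fun i => meas_ite_lt hX measurable_const i
  have hmeas_h : ∀ i, Measurable (h i) := fun i => (hmeas_hF i).mono (Fσ_le hmeas s) le_rfl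
  have hXg : Measurable X := hX.mono (Fσ_le hmeas s) le_rfl
  have hTpt : ∀ ω, ((∑ i ∈ Finset.range (X ω), fam L I (Sum.inr (u, i)) ω : ℕ) : ℝ≥0∞)
      = ∑' i : ℕ, b i ω * h i ω := by
    intro ω
    rw [Nat.cast_sum, ← mul_one (∑ i ∈ Finset.range (X ω), b i ω)]
    exact cast_sum_mul_eq_tsum X b (fun _ => (1 : ℝ≥0∞)) ω
  have hpt2 : ∀ ω, ((∑ i ∈ Finset.range (X ω), fam L I (Sum.inr (u, i)) ω : ℕ) : ℝ≥0∞)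
      * ((∑ i ∈ Finset.range (X ω), fam L I (Sum.inr (u, i)) ω : ℕ) : ℝ≥0∞)
      = ∑' i : ℕ, ∑' j : ℕ, (b i ω * h i ω) * (b j ω * h j ω) := by
    intro ω
    rw [hTpt ω, ← ENNReal.tsum_mul_right]
    exact tsum_congr fun i => (ENNReal.tsum_mul_left).symm
  rw [lintegral_congr hpt2]
  rw [lintegral_tsum (fun i => Measurable.aemeasurable (Measurable.ennreal_tsum
    (fun j => (((hmeas_b i).fun_mul (hmeas_h i)).fun_mul ((hmeas_b j).fun_mul (hmeas_h j))))))]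
  have hinner : ∀ i, ∫⁻ ω, ∑' j : ℕ, (b i ω * h i ω) * (b j ω * h j ω) ∂ℙ
      = ∑' j : ℕ, ∫⁻ ω, (b i ω * h i ω) * (b j ω * h j ω) ∂ℙ :=
    fun i => lintegral_tsum (fun j => Measurable.aemeasurable
      (((hmeas_b i).fun_mul (hmeas_h i)).fun_mul ((hmeas_b j).fun_mul (hmeas_h j))))
  rw [tsum_congr hinner]
  have hterm : ∀ i j : ℕ, ∫⁻ ω, (b i ω * h i ω) * (b j ω * h j ω) ∂ℙ
      = ENNReal.ofReal (α ^ 2) * ℙ ({ω | i < X ω} ∩ {ω | j < X ω})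
        + (if j = i then ENNReal.ofReal (α - α ^ 2) * ℙ {ω | i < X ω} else 0) := by
    intro i j
    by_cases hij : j = i
    · subst hij
      rw [if_pos rfl]
      have hpt : ∀ ω, (b j ω * h j ω) * (b j ω * h j ω) = b j ω * h j ω := by
        intro ω
        have hbb : b j ω * b j ω = b j ω := by
          by_cases hI : I u j ω <;> simp [hbdef, fam, hI]
        have hhh : h j ω * h j ω = h j ω := by
          by_cases hlt : j < X ω <;> simp [hhdef, hlt]
        calc (b j ω * h j ω) * (b j ω * h j ω)
            = (b j ω * b j ω) * (h j ω * h j ω) := by ring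
          _ = b j ω * h j ω := by rw [hbb, hhh]
      rw [lintegral_congr hpt, peel hmeas hind (hu j) (hmeas_hF j), lintegral_fam_inr hIb,
        lintegral_ite_lt hmeas hX j, Set.inter_self]
      rw [← add_mul, ← ENNReal.ofReal_add (by positivity) (by nlinarith)]
      congr 2
      ring
    · rw [if_neg hij, add_zero]
      have hpt : ∀ ω, (b i ω * h i ω) * (b j ω * h j ω)
          = b i ω * (b j ω * (h i ω * h j ω)) := fun ω => by ring
      rw [lintegral_congr hpt]
      have hju : Sum.inr (u, j) ∈ s ∪ {Sum.inr (u, j)} := Set.mem_union_right _ rfl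
      have hg1 : Measurable[Fσ L I (s ∪ {Sum.inr (u, j)})]
          (fun ω => b j ω * (h i ω * h j ω)) := by
        refine Measurable.mul (meas_famE_of_mem hju) (Measurable.mul ?_ ?_)
        · exact (hmeas_hF i).mono (Fσ_mono Set.subset_union_left) le_rfl
        · exact (hmeas_hF j).mono (Fσ_mono Set.subset_union_left) le_rfl
      have hi_notin : Sum.inr (u, i) ∉ s ∪ {Sum.inr (u, j)} := by
        intro hmem
        rcases hmem with hmem | hmem
        · exact hu i hmem
        · simp only [Set.mem_singleton_iff, Sum.inr.injEq, Prod.mk.injEq] at hmem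
          exact hij hmem.2.symm
      rw [peel hmeas hind hi_notin hg1, lintegral_fam_inr hIb]
      have hg2 : Measurable[Fσ L I s] (fun ω => h i ω * h j ω) :=
        (hmeas_hF i).fun_mul (hmeas_hF j)
      rw [peel hmeas hind (hu j) hg2, lintegral_fam_inr hIb, lintegral_ite_lt2 hmeas hX i j]
      rw [← mul_assoc, ← ENNReal.ofReal_mul hα0]
      congr 2
      ring
  rw [tsum_congr (fun i => tsum_congr (fun j => hterm i j))]
  have hsplit : ∀ i : ℕ, ∑' j : ℕ, (ENNReal.ofReal (α ^ 2) * ℙ ({ω | i < X ω} ∩ {ω | j < X ω})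
      + (if j = i then ENNReal.ofReal (α - α ^ 2) * ℙ {ω | i < X ω} else 0))
      = ENNReal.ofReal (α ^ 2) * (∑' j : ℕ, ℙ ({ω | i < X ω} ∩ {ω | j < X ω}))
        + ENNReal.ofReal (α - α ^ 2) * ℙ {ω | i < X ω} := by
    intro i
    rw [ENNReal.tsum_add, ENNReal.tsum_mul_left, tsum_eq_single i (fun j hj => if_neg hj)]
    rw [if_pos rfl]
  rw [tsum_congr hsplit, ENNReal.tsum_add, ENNReal.tsum_mul_left, ENNReal.tsum_mul_left]
  congr 1
  · congr 1
    -- ∑' i, ∑' j, ℙ (A i ∩ A j) = ∫⁻ X * X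
    have h1 : ∀ i j : ℕ, ℙ ({ω | i < X ω} ∩ {ω | j < X ω}) = ∫⁻ ω, h i ω * h j ω ∂ℙ :=
      fun i j => (lintegral_ite_lt2 hmeas hX i j).symm
    rw [tsum_congr (fun i => tsum_congr (fun j => h1 i j))]
    rw [tsum_congr (fun i => (lintegral_tsum (fun j =>
      Measurable.aemeasurable ((hmeas_h i).fun_mul (hmeas_h j)))).symm)]
    rw [← lintegral_tsum (fun i => Measurable.aemeasurable
      (Measurable.ennreal_tsum (fun j => (hmeas_h i).fun_mul (hmeas_h j))))]
    refine lintegral_congr fun ω => ?_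
    have h2 : ∑' (i : ℕ) (j : ℕ), h i ω * h j ω = (∑' i : ℕ, h i ω) * (∑' j : ℕ, h j ω) := by
      rw [← ENNReal.tsum_mul_right]
      exact tsum_congr fun i => ENNReal.tsum_mul_left
    rw [h2]
    have h3 : ∑' i : ℕ, h i ω = (X ω : ℝ≥0∞) := by
      have := tsum_ite_lt X (fun _ => (1 : ℝ≥0∞)) ω
      simpa [hhdef] using this
    rw [h3]
  · congr 1
    have h1 : ∀ i : ℕ, ℙ {ω | i < X ω} = ∫⁻ ω, h i ω ∂ℙ :=
      fun i => (lintegral_ite_lt hmeas hX i).symm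
    rw [tsum_congr h1, ← lintegral_tsum (fun i => (hmeas_h i).aemeasurable)]
    refine lintegral_congr fun ω => ?_
    have h3 : ∑' i : ℕ, h i ω = (X ω : ℝ≥0∞) := by
      have := tsum_ite_lt X (fun _ => (1 : ℝ≥0∞)) ω
      simpa [hhdef] using this
    rw [h3]

end Indep

section NPart
variable {V : Type*} {Ω : Type*} [MeasureSpace Ω] [IsProbabilityMeasure (ℙ : Measure Ω)]
variable {pa : V → V} {r : V} {L : V → Ω → ℕ} {I : V → ℕ → Ω → Bool} {N : V → Ω → ℕ}
variable {lam α : ℝ}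

/-- index set of coordinates generating `N w` -/
def Sset (pa : V → V) (w : V) : Set (V ⊕ V × ℕ) := {x | Anc pa (Sum.elim id Prod.fst x) w}

lemma inl_mem_Sset {a w : V} : Sum.inl a ∈ Sset pa w ↔ Anc pa a w := Iff.rfl

lemma inr_mem_Sset {a w : V} {i : ℕ} : (Sum.inr (a, i) : V ⊕ V × ℕ) ∈ Sset pa w ↔ Anc pa a w :=
  Iff.rfl

lemma Sset_pa_subset {w : V} : Sset pa (pa w) ⊆ Sset pa w := by
  rintro (a | ⟨a, i⟩) hx
  · exact anc_of_anc_pa hx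
  · exact anc_of_anc_pa hx

lemma measN (hp : ∀ v, ∃ n, pa^[n] v = r) (hr : pa r = r)
    (hNr : ∀ ω, N r ω = L r ω)
    (hNv : ∀ v, v ≠ r → ∀ ω, N v ω
      = L v ω + ∑ i ∈ Finset.range (N (pa v) ω), (if I v i ω then 1 else 0)) :
    ∀ w : V, Measurable[Fσ L I (Sset pa w)] (N w) := by
  suffices h : ∀ (n : ℕ) (w : V), dep hp w ≤ n → Measurable[Fσ L I (Sset pa w)] (N w) by
    exact fun w => h (dep hp w) w le_rfl
  intro n
  induction n with
  | zero =>
    intro w hw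
    have hwr : w = r := (dep_eq_zero_iff hp hr).1 (Nat.le_zero.1 hw)
    subst hwr
    have hfun : N w = fam L I (Sum.inl w) := funext fun ω => hNr ω
    rw [hfun]
    exact meas_fam_of_mem (inl_mem_Sset.2 (anc_refl w))
  | succ n ih =>
    intro w hw
    by_cases hwr : w = r
    · subst hwr
      have hfun : N w = fam L I (Sum.inl w) := funext fun ω => hNr ω
      rw [hfun]
      exact meas_fam_of_mem (inl_mem_Sset.2 (anc_refl w))
    · have hdep : dep hp (pa w) ≤ n := by
        have := dep_pa hp hr hwr
        omega
      have hNpa : Measurable[Fσ L I (Sset pa w)] (N (pa w)) :=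
        (ih (pa w) hdep).mono (Fσ_mono Sset_pa_subset) le_rfl
      have hfun : N w = fun ω => fam L I (Sum.inl w) ω
          + ∑ i ∈ Finset.range (N (pa w) ω), fam L I (Sum.inr (w, i)) ω :=
        funext fun ω => hNv w hwr ω
      rw [hfun]
      exact Measurable.add (meas_fam_of_mem (inl_mem_Sset.2 (anc_refl w)))
        (meas_sum_range hNpa fun i => meas_fam_of_mem (inr_mem_Sset.2 (anc_refl w)))

lemma lintegral_N (hp : ∀ v, ∃ n, pa^[n] v = r) (hr : pa r = r)
    (hmeas : ∀ j, Measurable (fam L I j))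
    (hind : iIndepFun (fam L I) ℙ)
    (hIb : ∀ v i, IsBernoulliRV (I v i) α)
    (hlam : 0 ≤ lam) (hα0 : 0 ≤ α) (hα1 : α ≤ 1)
    (hLr : ∀ k : ℕ, (ℙ : Measure Ω) {ω | L r ω = k}
      = ENNReal.ofReal (Real.exp (-lam) * lam ^ k / (Nat.factorial k)))
    (hLv : ∀ v, v ≠ r → ∀ k : ℕ, (ℙ : Measure Ω) {ω | L v ω = k}
      = ENNReal.ofReal (Real.exp (-(lam * (1 - α))) * (lam * (1 - α)) ^ k / (Nat.factorial k)))
    (hNr : ∀ ω, N r ω = L r ω)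
    (hNv : ∀ v, v ≠ r → ∀ ω, N v ω
      = L v ω + ∑ i ∈ Finset.range (N (pa v) ω), (if I v i ω then 1 else 0)) :
    ∀ w : V, ∫⁻ ω, (N w ω : ℝ≥0∞) ∂ℙ = ENNReal.ofReal lam := by
  suffices h : ∀ (n : ℕ) (w : V), dep hp w ≤ n → ∫⁻ ω, (N w ω : ℝ≥0∞) ∂ℙ = ENNReal.ofReal lam by
    exact fun w => h (dep hp w) w le_rfl
  have hNm := measN (L := L) (I := I) hp hr hNr hNv
  intro n
  induction n with
  | zero =>
    intro w hw
    have hwr : w = r := (dep_eq_zero_iff hp hr).1 (Nat.le_zero.1 hw)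
    subst hwr
    have hfun : ∀ ω, (N w ω : ℝ≥0∞) = (L w ω : ℝ≥0∞) := fun ω => by rw [hNr ω]
    rw [lintegral_congr hfun]
    exact poisson_m1 hlam (hmeas (Sum.inl w)) hLr
  | succ n ih =>
    intro w hw
    by_cases hwr : w = r
    · subst hwr
      have hfun : ∀ ω, (N w ω : ℝ≥0∞) = (L w ω : ℝ≥0∞) := fun ω => by rw [hNr ω]
      rw [lintegral_congr hfun]
      exact poisson_m1 hlam (hmeas (Sum.inl w)) hLr
    · have hdep : dep hp (pa w) ≤ n := by
        have := dep_pa hp hr hwr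
        omega
      have hfun : ∀ ω, (N w ω : ℝ≥0∞) = (L w ω : ℝ≥0∞)
          + ((∑ i ∈ Finset.range (N (pa w) ω), fam L I (Sum.inr (w, i)) ω : ℕ) : ℝ≥0∞) := by
        intro ω
        have hsame : (∑ i ∈ Finset.range (N (pa w) ω), if I w i ω then 1 else 0)
            = ∑ i ∈ Finset.range (N (pa w) ω), fam L I (Sum.inr (w, i)) ω := rfl
        rw [hNv w hwr ω, hsame, Nat.cast_add]
      rw [lintegral_congr hfun]
      have hmeasT : Measurable (fun ω =>
          ((∑ i ∈ Finset.range (N (pa w) ω), fam L I (Sum.inr (w, i)) ω : ℕ) : ℝ≥0∞)) := by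
        refine (measurable_from_top (f := fun n : ℕ => (n : ℝ≥0∞))).comp ?_
        refine meas_sum_range ?_ (fun i => hmeas _)
        exact (hNm (pa w)).mono (Fσ_le hmeas _) le_rfl
      have hmeasL : Measurable (fun ω => ((L w ω : ℕ) : ℝ≥0∞)) :=
        (measurable_from_top (f := fun n : ℕ => (n : ℝ≥0∞))).comp (hmeas (Sum.inl w))
      rw [lintegral_add_left hmeasL]
      have hthin : ∫⁻ ω, ((∑ i ∈ Finset.range (N (pa w) ω),
          fam L I (Sum.inr (w, i)) ω : ℕ) : ℝ≥0∞) ∂ℙ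
          = ENNReal.ofReal α * ∫⁻ ω, (N (pa w) ω : ℝ≥0∞) ∂ℙ := by
        have h1 : ∀ ω, ((∑ i ∈ Finset.range (N (pa w) ω),
            fam L I (Sum.inr (w, i)) ω : ℕ) : ℝ≥0∞)
            = ((∑ i ∈ Finset.range (N (pa w) ω),
                fam L I (Sum.inr (w, i)) ω : ℕ) : ℝ≥0∞) * (((1 : ℕ) : ℝ≥0∞)) := by
          intro ω; rw [Nat.cast_one, mul_one]
        rw [lintegral_congr h1]
        have h2 := thin_lintegral hmeas hind hIb
          (s := Sset pa (pa w)) (u := w)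
          (fun i => fun hmem => not_anc_pa_self hp hr hwr (inr_mem_Sset.1 hmem))
          (hNm (pa w)) (measurable_const (a := (1 : ℕ)))
        rw [h2]
        congr 1
        refine lintegral_congr fun ω => ?_
        rw [Nat.cast_one, mul_one]
      rw [hthin, ih (pa w) hdep]
      rw [poisson_m1 (X := L w) (by nlinarith) (hmeas (Sum.inl w)) (hLv w hwr)]
      rw [← ENNReal.ofReal_mul hα0, ← ENNReal.ofReal_add (by nlinarith) (by nlinarith)]
      congr 1
      ring


lemma lintegral_T (hp : ∀ v, ∃ n, pa^[n] v = r) (hr : pa r = r)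
    (hmeas : ∀ j, Measurable (fam L I j))
    (hind : iIndepFun (fam L I) ℙ)
    (hIb : ∀ v i, IsBernoulliRV (I v i) α)
    (hNm : ∀ w : V, Measurable[Fσ L I (Sset pa w)] (N w))
    {u : V} (hur : u ≠ r) :
    ∫⁻ ω, ((∑ i ∈ Finset.range (N (pa u) ω), fam L I (Sum.inr (u, i)) ω : ℕ) : ℝ≥0∞) ∂ℙ
      = ENNReal.ofReal α * ∫⁻ ω, (N (pa u) ω : ℝ≥0∞) ∂ℙ := by
  have h1 : ∀ ω, ((∑ i ∈ Finset.range (N (pa u) ω),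
      fam L I (Sum.inr (u, i)) ω : ℕ) : ℝ≥0∞)
      = ((∑ i ∈ Finset.range (N (pa u) ω),
          fam L I (Sum.inr (u, i)) ω : ℕ) : ℝ≥0∞) * (((1 : ℕ) : ℝ≥0∞)) := by
    intro ω; rw [Nat.cast_one, mul_one]
  rw [lintegral_congr h1]
  have h2 := thin_lintegral hmeas hind hIb
    (s := Sset pa (pa u)) (u := u)
    (fun i => fun hmem => not_anc_pa_self hp hr hur (inr_mem_Sset.1 hmem))
    (hNm (pa u)) (measurable_const (a := (1 : ℕ)))
  rw [h2]
  congr 1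
  refine lintegral_congr fun ω => ?_
  rw [Nat.cast_one, mul_one]

lemma lintegral_N_mul [Fintype V] {G : SimpleGraph V} (hG : G.IsTree)
    (hadj : ∀ v, v ≠ r → G.Adj (pa v) v)
    (hp : ∀ v, ∃ n, pa^[n] v = r) (hr : pa r = r)
    (hmeas : ∀ j, Measurable (fam L I j))
    (hind : iIndepFun (fam L I) ℙ)
    (hIb : ∀ v i, IsBernoulliRV (I v i) α)
    (hlam : 0 ≤ lam) (hα0 : 0 ≤ α) (hα1 : α ≤ 1)
    (hLr : ∀ k : ℕ, (ℙ : Measure Ω) {ω | L r ω = k}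
      = ENNReal.ofReal (Real.exp (-lam) * lam ^ k / (Nat.factorial k)))
    (hLv : ∀ v, v ≠ r → ∀ k : ℕ, (ℙ : Measure Ω) {ω | L v ω = k}
      = ENNReal.ofReal (Real.exp (-(lam * (1 - α))) * (lam * (1 - α)) ^ k / (Nat.factorial k)))
    (hNr : ∀ ω, N r ω = L r ω)
    (hNv : ∀ v, v ≠ r → ∀ ω, N v ω
      = L v ω + ∑ i ∈ Finset.range (N (pa v) ω), (if I v i ω then 1 else 0)) :
    ∀ u w : V, ∫⁻ ω, (N u ω : ℝ≥0∞) * (N w ω : ℝ≥0∞) ∂ℙ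
      = ENNReal.ofReal (lam ^ 2 + lam * α ^ (G.dist u w)) := by
  have hNm := measN (L := L) (I := I) hp hr hNr hNv
  have hNg : ∀ w : V, Measurable (N w) := fun w => (hNm w).mono (Fσ_le hmeas _) le_rfl
  have hN1 := lintegral_N hp hr hmeas hind hIb hlam hα0 hα1 hLr hLv hNr hNv
  have hNE : ∀ w : V, Measurable (fun ω => (N w ω : ℝ≥0∞)) :=
    fun w => (measurable_from_top (f := fun n : ℕ => (n : ℝ≥0∞))).comp (hNg w)
  have ht0 : 0 ≤ lam * (1 - α) := by nlinarith
  -- decomposition of N u for u ≠ r, in ℝ≥0∞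
  have hdecomp : ∀ u : V, u ≠ r → ∀ ω, (N u ω : ℝ≥0∞)
      = (L u ω : ℝ≥0∞) + ((∑ i ∈ Finset.range (N (pa u) ω),
          fam L I (Sum.inr (u, i)) ω : ℕ) : ℝ≥0∞) := by
    intro u hur ω
    have hsame : (∑ i ∈ Finset.range (N (pa u) ω), if I u i ω then 1 else 0)
        = ∑ i ∈ Finset.range (N (pa u) ω), fam L I (Sum.inr (u, i)) ω := rfl
    rw [hNv u hur ω, hsame, Nat.cast_add]
  have hTmeasS : ∀ u : V, Measurable[Fσ L I (Sset pa (pa u)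
      ∪ {x | ∃ i : ℕ, x = Sum.inr (u, i)})]
      (fun ω => ((∑ i ∈ Finset.range (N (pa u) ω),
        fam L I (Sum.inr (u, i)) ω : ℕ) : ℝ≥0∞)) := by
    intro u
    refine (measurable_from_top (f := fun n : ℕ => (n : ℝ≥0∞))).comp ?_
    refine meas_sum_range ((hNm (pa u)).mono (Fσ_mono Set.subset_union_left) le_rfl) ?_
    exact fun i => meas_fam_of_mem (Set.mem_union_right _ ⟨i, rfl⟩)
  have hTmeas : ∀ u : V, Measurable
      (fun ω => ((∑ i ∈ Finset.range (N (pa u) ω),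
        fam L I (Sum.inr (u, i)) ω : ℕ) : ℝ≥0∞)) :=
    fun u => (hTmeasS u).mono (Fσ_le hmeas _) le_rfl
  have hLE : ∀ u : V, Measurable (fun ω => (L u ω : ℝ≥0∞)) :=
    fun u => (measurable_from_top (f := fun n : ℕ => (n : ℝ≥0∞))).comp (hmeas (Sum.inl u))
  have hinl_not : ∀ u : V, u ≠ r → Sum.inl u ∉ Sset pa (pa u)
      ∪ {x | ∃ i : ℕ, x = Sum.inr (u, i)} := by
    intro u hur hmem
    rcases hmem with hmem | hmem
    · exact not_anc_pa_self hp hr hur (inl_mem_Sset.1 hmem)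
    · obtain ⟨i, hi⟩ := hmem
      exact Sum.inl_ne_inr hi
  have hroot : ∫⁻ ω, (N r ω : ℝ≥0∞) * (N r ω : ℝ≥0∞) ∂ℙ
      = ENNReal.ofReal (lam ^ 2 + lam * α ^ (G.dist r r)) := by
    have hfun : ∀ ω, (N r ω : ℝ≥0∞) * (N r ω : ℝ≥0∞)
        = (L r ω : ℝ≥0∞) * (L r ω : ℝ≥0∞) := fun ω => by rw [hNr ω]
    rw [lintegral_congr hfun, poisson_m2 (X := L r) hlam (hmeas (Sum.inl r)) hLr,
      SimpleGraph.dist_self, pow_zero]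
    congr 1
    ring
  suffices h : ∀ (n : ℕ) (u w : V), dep hp u + dep hp w ≤ n →
      ∫⁻ ω, (N u ω : ℝ≥0∞) * (N w ω : ℝ≥0∞) ∂ℙ
        = ENNReal.ofReal (lam ^ 2 + lam * α ^ (G.dist u w)) by
    exact fun u w => h _ u w le_rfl
  intro n
  induction n with
  | zero =>
    intro u w h0
    have hur : u = r := (dep_eq_zero_iff hp hr).1 (by omega)
    have hwr : w = r := (dep_eq_zero_iff hp hr).1 (by omega)
    subst hur; subst hwr
    exact hroot
  | succ n ih =>
    intro u w hn
    by_cases huw : u = w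
    · subst huw
      by_cases hur : u = r
      · subst hur; exact hroot
      · -- diagonal step
        have hdep := dep_pa hp hr hur
        have hIH := ih (pa u) (pa u) (by omega)
        rw [SimpleGraph.dist_self, pow_zero, mul_one] at hIH
        have hexp : ∀ ω, (N u ω : ℝ≥0∞) * (N u ω : ℝ≥0∞)
            = (L u ω : ℝ≥0∞) * (L u ω : ℝ≥0∞)
              + (L u ω : ℝ≥0∞) * ((∑ i ∈ Finset.range (N (pa u) ω),
                  fam L I (Sum.inr (u, i)) ω : ℕ) : ℝ≥0∞)
              + ((∑ i ∈ Finset.range (N (pa u) ω),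
                  fam L I (Sum.inr (u, i)) ω : ℕ) : ℝ≥0∞) * (L u ω : ℝ≥0∞)
              + ((∑ i ∈ Finset.range (N (pa u) ω),
                  fam L I (Sum.inr (u, i)) ω : ℕ) : ℝ≥0∞)
                * ((∑ i ∈ Finset.range (N (pa u) ω),
                  fam L I (Sum.inr (u, i)) ω : ℕ) : ℝ≥0∞) := by
          intro ω
          rw [hdecomp u hur ω]
          ring
        rw [lintegral_congr hexp]
        rw [lintegral_add_left ((((hLE u).fun_mul (hLE u)).fun_add
          ((hLE u).fun_mul (hTmeas u))).fun_add ((hTmeas u).fun_mul (hLE u)))]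
        rw [lintegral_add_left (((hLE u).fun_mul (hLE u)).fun_add ((hLE u).fun_mul (hTmeas u)))]
        rw [lintegral_add_left ((hLE u).fun_mul (hLE u))]
        have hLL : ∫⁻ ω, (L u ω : ℝ≥0∞) * (L u ω : ℝ≥0∞) ∂ℙ
            = ENNReal.ofReal (lam * (1 - α) + (lam * (1 - α)) ^ 2) :=
          poisson_m2 (X := L u) ht0 (hmeas (Sum.inl u)) (hLv u hur)
        have hdisj : Disjoint {Sum.inl u} (Sset pa (pa u)
            ∪ {x | ∃ i : ℕ, x = Sum.inr (u, i)}) :=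
          Set.disjoint_singleton_left.2 (hinl_not u hur)
        have hLT : ∫⁻ ω, (L u ω : ℝ≥0∞) * ((∑ i ∈ Finset.range (N (pa u) ω),
            fam L I (Sum.inr (u, i)) ω : ℕ) : ℝ≥0∞) ∂ℙ
            = (∫⁻ ω, (L u ω : ℝ≥0∞) ∂ℙ) * ∫⁻ ω, ((∑ i ∈ Finset.range (N (pa u) ω),
                fam L I (Sum.inr (u, i)) ω : ℕ) : ℝ≥0∞) ∂ℙ :=
          lintegral_mul_fσ hmeas hind hdisj
            (meas_famE_of_mem (Set.mem_singleton (Sum.inl u))) (hTmeasS u)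
        have hTL : ∫⁻ ω, ((∑ i ∈ Finset.range (N (pa u) ω),
            fam L I (Sum.inr (u, i)) ω : ℕ) : ℝ≥0∞) * (L u ω : ℝ≥0∞) ∂ℙ
            = (∫⁻ ω, ((∑ i ∈ Finset.range (N (pa u) ω),
                fam L I (Sum.inr (u, i)) ω : ℕ) : ℝ≥0∞) ∂ℙ) * ∫⁻ ω, (L u ω : ℝ≥0∞) ∂ℙ :=
          lintegral_mul_fσ hmeas hind hdisj.symm (hTmeasS u)
            (meas_famE_of_mem (Set.mem_singleton (Sum.inl u)))
        have hL1 : ∫⁻ ω, (L u ω : ℝ≥0∞) ∂ℙ = ENNReal.ofReal (lam * (1 - α)) :=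
          poisson_m1 (X := L u) ht0 (hmeas (Sum.inl u)) (hLv u hur)
        have hT1 : ∫⁻ ω, ((∑ i ∈ Finset.range (N (pa u) ω),
            fam L I (Sum.inr (u, i)) ω : ℕ) : ℝ≥0∞) ∂ℙ
            = ENNReal.ofReal α * ENNReal.ofReal lam := by
          rw [lintegral_T hp hr hmeas hind hIb hNm hur, hN1 (pa u)]
        have hTT := thin_sq_lintegral hmeas hind hα0 hα1 hIb
          (s := Sset pa (pa u)) (u := u)
          (fun i => fun hmem => not_anc_pa_self hp hr hur (inr_mem_Sset.1 hmem))
          (hNm (pa u))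
        rw [hLL, hLT, hTL, hL1, hT1, hTT, hIH, hN1 (pa u), SimpleGraph.dist_self, pow_zero]
        have hx1 : (0:ℝ) ≤ α * lam := mul_nonneg hα0 hlam
        have hx2 : (0:ℝ) ≤ lam * (1 - α) * (α * lam) := mul_nonneg ht0 hx1
        have hx3 : (0:ℝ) ≤ α * lam * (lam * (1 - α)) := mul_nonneg hx1 ht0
        have hx4 : (0:ℝ) ≤ α ^ 2 := sq_nonneg α
        have hx5 : (0:ℝ) ≤ lam ^ 2 + lam := by positivity
        have hx6 : (0:ℝ) ≤ α - α ^ 2 := by nlinarith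
        have hx7 : (0:ℝ) ≤ α ^ 2 * (lam ^ 2 + lam) := mul_nonneg hx4 hx5
        have hx8 : (0:ℝ) ≤ (α - α ^ 2) * lam := mul_nonneg hx6 hlam
        have hx9 : (0:ℝ) ≤ lam * (1 - α) + (lam * (1 - α)) ^ 2 := by positivity
        rw [← ENNReal.ofReal_mul hα0, ← ENNReal.ofReal_mul ht0,
          ← ENNReal.ofReal_mul hx1, ← ENNReal.ofReal_mul hx4,
          ← ENNReal.ofReal_mul hx6, ← ENNReal.ofReal_add hx7 hx8,
          ← ENNReal.ofReal_add hx9 hx2,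
          ← ENNReal.ofReal_add (by linarith) hx3,
          ← ENNReal.ofReal_add (by linarith) (by linarith)]
        congr 1
        ring
    · -- off-diagonal
      have step : ∀ u' w' : V, ¬ Anc pa u' w' → dep hp u' + dep hp w' ≤ n + 1 →
          ∫⁻ ω, (N u' ω : ℝ≥0∞) * (N w' ω : ℝ≥0∞) ∂ℙ
            = ENNReal.ofReal (lam ^ 2 + lam * α ^ (G.dist u' w')) := by
        intro u' w' hnanc hd
        have hur : u' ≠ r := ne_r_of_not_anc hp hr hnanc
        have hdep := dep_pa hp hr hur
        have hIH := ih (pa u') w' (by omega)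
        have hexp : ∀ ω, (N u' ω : ℝ≥0∞) * (N w' ω : ℝ≥0∞)
            = (L u' ω : ℝ≥0∞) * (N w' ω : ℝ≥0∞)
              + ((∑ i ∈ Finset.range (N (pa u') ω),
                  fam L I (Sum.inr (u', i)) ω : ℕ) : ℝ≥0∞) * (N w' ω : ℝ≥0∞) := by
          intro ω
          rw [hdecomp u' hur ω, add_mul]
        rw [lintegral_congr hexp, lintegral_add_left ((hLE u').fun_mul (hNE w'))]
        have hdisj : Disjoint {Sum.inl u'} (Sset pa w') :=
          Set.disjoint_singleton_left.2 (fun hmem => hnanc (inl_mem_Sset.1 hmem))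
        have hLN : ∫⁻ ω, (L u' ω : ℝ≥0∞) * (N w' ω : ℝ≥0∞) ∂ℙ
            = (∫⁻ ω, (L u' ω : ℝ≥0∞) ∂ℙ) * ∫⁻ ω, (N w' ω : ℝ≥0∞) ∂ℙ := by
          refine lintegral_mul_fσ hmeas hind hdisj
            (meas_famE_of_mem (Set.mem_singleton (Sum.inl u'))) ?_
          exact (measurable_from_top (f := fun n : ℕ => (n : ℝ≥0∞))).comp (hNm w')
        have hu_notin : ∀ i : ℕ, (Sum.inr (u', i) : V ⊕ V × ℕ)
            ∉ Sset pa (pa u') ∪ Sset pa w' := by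
          intro i hmem
          rcases hmem with hmem | hmem
          · exact not_anc_pa_self hp hr hur (inr_mem_Sset.1 hmem)
          · exact hnanc (inr_mem_Sset.1 hmem)
        have hTN : ∫⁻ ω, ((∑ i ∈ Finset.range (N (pa u') ω),
            fam L I (Sum.inr (u', i)) ω : ℕ) : ℝ≥0∞) * (N w' ω : ℝ≥0∞) ∂ℙ
            = ENNReal.ofReal α * ∫⁻ ω, (N (pa u') ω : ℝ≥0∞) * (N w' ω : ℝ≥0∞) ∂ℙ :=
          thin_lintegral hmeas hind hIb hu_notin
            ((hNm (pa u')).mono (Fσ_mono Set.subset_union_left) le_rfl)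
            ((hNm w').mono (Fσ_mono Set.subset_union_right) le_rfl)
        rw [hLN, hTN, hIH, hN1 w',
          poisson_m1 (X := L u') ht0 (hmeas (Sum.inl u')) (hLv u' hur),
          dist_step hp hr hG hadj hnanc]
        rw [← ENNReal.ofReal_mul ht0, ← ENNReal.ofReal_mul hα0,
          ← ENNReal.ofReal_add (by positivity) (by positivity)]
        congr 1
        ring
      by_cases hanc : Anc pa u w
      · have hnanc : ¬ Anc pa w u := fun h => huw (anc_antisymm hp hr hanc h)
        have h := step w u hnanc (by omega)
        calc ∫⁻ ω, (N u ω : ℝ≥0∞) * (N w ω : ℝ≥0∞) ∂ℙ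
            = ∫⁻ ω, (N w ω : ℝ≥0∞) * (N u ω : ℝ≥0∞) ∂ℙ :=
              lintegral_congr fun ω => mul_comm _ _
          _ = ENNReal.ofReal (lam ^ 2 + lam * α ^ (G.dist w u)) := h
          _ = ENNReal.ofReal (lam ^ 2 + lam * α ^ (G.dist u w)) := by
              rw [SimpleGraph.dist_comm]
      · exact step u w hanc hn


lemma integral_nat_eq {Ω : Type*} [MeasureSpace Ω] [IsProbabilityMeasure (ℙ : Measure Ω)]
    {Z : Ω → ℕ} (hZ : Measurable Z) {c : ℝ}
    (hc : ∫⁻ ω, (Z ω : ℝ≥0∞) ∂ℙ = ENNReal.ofReal c) (hc0 : 0 ≤ c) :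
    Integrable (fun ω => (Z ω : ℝ)) ℙ ∧ ∫ ω, (Z ω : ℝ) ∂ℙ = c := by
  have hae : AEMeasurable (fun ω => ((Z ω : ℕ) : ℝ≥0∞)) ℙ :=
    ((measurable_from_top (f := fun n : ℕ => (n : ℝ≥0∞))).comp hZ).aemeasurable
  have heq : (fun ω => (Z ω : ℝ)) = fun ω => ((Z ω : ℕ) : ℝ≥0∞).toReal :=
    funext fun ω => (ENNReal.toReal_natCast (Z ω)).symm
  constructor
  · rw [heq]
    exact integrable_toReal_of_lintegral_ne_top hae (by rw [hc]; exact ENNReal.ofReal_ne_top)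
  · rw [heq, integral_toReal hae (Filter.Eventually.of_forall fun ω => ENNReal.natCast_lt_top _),
      hc, ENNReal.toReal_ofReal hc0]

end NPart
end MPMRFAux

/-- `Cov(N_v, M) = λ · ∑_{j∈V} α^{dist(v,j)}`, an exponentially
transformed closeness index. -/
theorem cov_aggregate_eq_closeness
    {V Ω : Type*} [Fintype V] [DecidableEq V]
    [MeasureSpace Ω] [IsProbabilityMeasure (ℙ : Measure Ω)]
    (d : ℕ) (hd : Fintype.card V = d)
    (G : SimpleGraph V) (hG : G.IsTree)
    (r : V) (pa : V → V) (hpa : IsParentMap G r pa)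
    (lam : ℝ) (hlam : 0 < lam)
    (α : ℝ) (hα : α ∈ Set.Ioo (0 : ℝ) 1)
    (N : V → Ω → ℕ) (hN : IsMPMRF lam (fun _ _ => α) pa r N)
    (v : V) :
    cov (fun ω => (N v ω : ℝ)) (fun ω => ((∑ j, N j ω : ℕ) : ℝ))
      = lam * ∑ j : V, α ^ (G.dist v j) := by
  classical
  obtain ⟨L, I, hind, hLr, hLv, hIb, hNr, hNv⟩ := hN
  obtain ⟨hrr, hadj, hp⟩ := hpa
  have hα0 : (0:ℝ) ≤ α := le_of_lt hα.1
  have hα1 : α ≤ 1 := le_of_lt hα.2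
  have hlam0 : (0:ℝ) ≤ lam := hlam.le
  have hmeas : ∀ j, Measurable (MPMRFAux.fam L I j) := by
    rintro (a | p)
    · by_cases ha : a = r
      · subst ha; exact hLr.1
      · exact (hLv a ha).1
    · exact Measurable.ite ((hIb p.1 p.2).1 (measurableSet_singleton true))
        measurable_const measurable_const
  have hind' : iIndepFun (MPMRFAux.fam L I) ℙ := hind
  have hIb' : ∀ u i, IsBernoulliRV (I u i) α := fun u i => hIb u i
  have hLv2 : ∀ u, u ≠ r → ∀ k : ℕ, (ℙ : Measure Ω) {ω | L u ω = k}
      = ENNReal.ofReal (Real.exp (-(lam * (1 - α))) * (lam * (1 - α)) ^ k / (Nat.factorial k)) :=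
    fun u hu => (hLv u hu).2
  have hmul := MPMRFAux.lintegral_N_mul hG hadj hp hrr hmeas hind' hIb'
    hlam0 hα0 hα1 hLr.2 hLv2 hNr hNv
  have hm1 := MPMRFAux.lintegral_N hp hrr hmeas hind' hIb'
    hlam0 hα0 hα1 hLr.2 hLv2 hNr hNv
  have hNm := MPMRFAux.measN (L := L) (I := I) hp hrr hNr hNv
  have hNg : ∀ w, Measurable (N w) := fun w => (hNm w).mono (MPMRFAux.Fσ_le hmeas _) le_rfl
  have hint1 : ∀ j, Integrable (fun ω => (N j ω : ℝ)) ℙ ∧ ∫ ω, (N j ω : ℝ) ∂ℙ = lam :=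
    fun j => MPMRFAux.integral_nat_eq (hNg j) (hm1 j) hlam0
  have hprod : ∀ j, Integrable (fun ω => (N v ω : ℝ) * (N j ω : ℝ)) ℙ
      ∧ ∫ ω, (N v ω : ℝ) * (N j ω : ℝ) ∂ℙ = lam ^ 2 + lam * α ^ (G.dist v j) := by
    intro j
    have hZ : Measurable (fun ω => N v ω * N j ω) := (hNg v).mul (hNg j)
    have hlint : ∫⁻ ω, ((N v ω * N j ω : ℕ) : ℝ≥0∞) ∂ℙ
        = ENNReal.ofReal (lam ^ 2 + lam * α ^ (G.dist v j)) := by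
      have hpt : ∀ ω, ((N v ω * N j ω : ℕ) : ℝ≥0∞) = (N v ω : ℝ≥0∞) * (N j ω : ℝ≥0∞) :=
        fun ω => by rw [Nat.cast_mul]
      rw [lintegral_congr hpt]
      exact hmul v j
    have h := MPMRFAux.integral_nat_eq hZ hlint (by positivity)
    have heq : (fun ω => ((N v ω * N j ω : ℕ) : ℝ)) = fun ω => (N v ω : ℝ) * (N j ω : ℝ) :=
      funext fun ω => by push_cast; ring
    rw [heq] at h
    exact h
  have hYpt : ∀ ω : Ω, ((∑ j, N j ω : ℕ) : ℝ) = ∑ j, (N j ω : ℝ) := fun ω => by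
    push_cast; rfl
  have hI1 : ∫ ω, (N v ω : ℝ) * ((∑ j, N j ω : ℕ) : ℝ) ∂ℙ
      = ∑ j, (lam ^ 2 + lam * α ^ (G.dist v j)) := by
    have hpt : ∀ ω : Ω, (N v ω : ℝ) * ((∑ j, N j ω : ℕ) : ℝ)
        = ∑ j, (N v ω : ℝ) * (N j ω : ℝ) := by
      intro ω
      rw [hYpt ω, Finset.mul_sum]
    rw [integral_congr_ae (Filter.Eventually.of_forall hpt),
      integral_finset_sum Finset.univ (fun j _ => (hprod j).1)]
    exact Finset.sum_congr rfl fun j _ => (hprod j).2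
  have hI2 : ∫ ω, ((∑ j, N j ω : ℕ) : ℝ) ∂ℙ = (Fintype.card V : ℝ) * lam := by
    rw [integral_congr_ae (Filter.Eventually.of_forall hYpt),
      integral_finset_sum Finset.univ (fun j _ => (hint1 j).1)]
    rw [Finset.sum_congr rfl fun j _ => (hint1 j).2, Finset.sum_const, Finset.card_univ,
      nsmul_eq_mul]
  unfold cov
  rw [hI1, (hint1 v).2, hI2]
  rw [Finset.sum_add_distrib, Finset.sum_const, Finset.card_univ, ← Finset.mul_sum]
  ring


end
end
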